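/- arXiv:1311.2859 — 3 statements merged into one kernel-verified Lean document; each statement's English description precedes it below -/
import Mathlib

section
/- Let f ∈ L¹(Ω) be nonnegative with all level sets {x ∈ Ω : f(x) = c} of Lebesgue measure zero, and let S₁, …, S_{m-1} > 0 with S₁ + ⋯ + S_m = |Ω|. Define t₁ = sup{s ∈ ℝ : |{x ∈ Ω : f(x) ≥ s}| ≥ S₁}, D̂₁ = {x ∈ Ω : f(x) ≥ t₁}, and recursively t_i = sup{s ∈ ℝ : |{x ∈ Ω \ (D̂₁ ∪ ⋯ ∪ D̂_{i−1}) : f(x) ≥ s}| ≥ S_i} and D̂_i = {x ∈ Ω \ (D̂₁ ∪ ⋯ ∪ D̂_{i−1}) : f(x) ≥ t_i} for i = 2, …, m−1. Then the thresholds are strictly decreasing: t₁ > t₂ > ⋯ > t_{m−1}. -/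
open MeasureTheory Set
open scoped ENNReal

open ENNReal in
lemma key_aux {N : ℕ} (f : EuclideanSpace ℝ (Fin N) → ℝ) (hf_meas : Measurable f)
    (E : Set (EuclideanSpace ℝ (Fin N))) (hE_meas : MeasurableSet E)
    (hE_fin : volume E ≠ ⊤)
    (hf0 : ∀ x ∈ E, 0 ≤ f x)
    (hlev : ∀ a : ℝ, volume {x ∈ E | f x = a} = 0)
    (hint : ∫⁻ x in E, ENNReal.ofReal (f x) ≠ ⊤)
    (Si : ℝ) (hSi : 0 < Si) (hSE : ENNReal.ofReal Si ≤ volume E) :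
    volume {x ∈ E | sSup {s : ℝ | ENNReal.ofReal Si ≤ volume {x ∈ E | s ≤ f x}} ≤ f x}
      = ENNReal.ofReal Si := by
  set μs : ℝ → ℝ≥0∞ := fun s => volume {x | x ∈ E ∧ s ≤ f x} with hμs
  set A : Set ℝ := {s : ℝ | ENNReal.ofReal Si ≤ μs s} with hA
  have hmono : Antitone μs := by
    intro a b hab
    exact measure_mono (fun x hx => ⟨hx.1, hab.trans hx.2⟩)
  have h0A : (0:ℝ) ∈ A := by
    have hE0 : {x | x ∈ E ∧ (0:ℝ) ≤ f x} = E :=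
      Set.ext fun x => ⟨fun h => h.1, fun h => ⟨h, hf0 x h⟩⟩
    have hμ0 : μs 0 = volume E := by simp only [hμs]; rw [hE0]
    show ENNReal.ofReal Si ≤ μs 0
    rw [hμ0]; exact hSE
  have hSine : ENNReal.ofReal Si ≠ 0 := by
    simp only [Ne, ENNReal.ofReal_eq_zero, not_le]; exact hSi
  have hbdd : BddAbove A := by
    obtain ⟨n, hn⟩ : ∃ n : ℕ, (∫⁻ x in E, ENNReal.ofReal (f x)) / ENNReal.ofReal Si < n :=
      ENNReal.exists_nat_gt (ENNReal.div_lt_top hint hSine).ne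
    refine ⟨n, fun s hs => ?_⟩
    by_contra hcon
    push_neg at hcon
    have hs0 : (0:ℝ) < s := lt_of_le_of_lt (Nat.cast_nonneg n) hcon
    have hmark : ENNReal.ofReal s * μs s ≤ ∫⁻ x in E, ENNReal.ofReal (f x) := by
      have h1 : μs s ≤ (volume.restrict E) {x | ENNReal.ofReal s ≤ ENNReal.ofReal (f x)} := by
        rw [Measure.restrict_apply
          (measurableSet_le measurable_const hf_meas.ennreal_ofReal)]
        exact measure_mono (fun x hx => ⟨ENNReal.ofReal_le_ofReal hx.2, hx.1⟩)
      calc ENNReal.ofReal s * μs s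
          ≤ ENNReal.ofReal s * (volume.restrict E) {x | ENNReal.ofReal s ≤ ENNReal.ofReal (f x)} :=
            mul_le_mul_right h1 _
        _ ≤ ∫⁻ x in E, ENNReal.ofReal (f x) :=
            mul_meas_ge_le_lintegral₀ hf_meas.ennreal_ofReal.aemeasurable _
    have h2 : ENNReal.ofReal s * ENNReal.ofReal Si ≤ ∫⁻ x in E, ENNReal.ofReal (f x) :=
      le_trans (mul_le_mul_right hs _) hmark
    have h3 : ENNReal.ofReal s ≤ (∫⁻ x in E, ENNReal.ofReal (f x)) / ENNReal.ofReal Si :=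
      ENNReal.le_div_iff_mul_le (Or.inl hSine) (Or.inl ENNReal.ofReal_ne_top) |>.2 h2
    have h4 : ENNReal.ofReal s < (n : ℝ≥0∞) := lt_of_le_of_lt h3 hn
    rw [← ENNReal.ofReal_natCast, ENNReal.ofReal_lt_ofReal_iff_of_nonneg hs0.le] at h4
    exact absurd h4 (not_lt.2 hcon.le)
  set T : ℝ := sSup A with hT
  have hAne : A.Nonempty := ⟨0, h0A⟩
  have hmeasn : ∀ c : ℝ, NullMeasurableSet {x | x ∈ E ∧ c ≤ f x} volume := fun c =>
    (hE_meas.inter (measurableSet_le measurable_const hf_meas)).nullMeasurableSet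
  have hfinn : ∀ c : ℝ, volume {x | x ∈ E ∧ c ≤ f x} ≠ ⊤ := fun c =>
    ne_top_of_le_ne_top hE_fin (measure_mono (fun x hx => hx.1))
  -- lower bound: ofReal Si ≤ μs T
  have hlow : ENNReal.ofReal Si ≤ μs T := by
    have hAll : ∀ s : ℝ, s < T → ENNReal.ofReal Si ≤ μs s := by
      intro s hsT
      obtain ⟨a, haA, hsa⟩ := exists_lt_of_lt_csSup hAne hsT
      exact le_trans haA (hmono hsa.le)
    have hset : {x | x ∈ E ∧ T ≤ f x} = ⋂ n : ℕ, {x | x ∈ E ∧ T - 1/(n+1) ≤ f x} := by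
      ext x
      simp only [mem_iInter, mem_setOf_eq]
      constructor
      · intro h n
        have h2 := h.2
        have h3 : (0:ℝ) < 1/((n:ℝ)+1) := by positivity
        exact ⟨h.1, by linarith⟩
      · intro h
        refine ⟨(h 0).1, ?_⟩
        by_contra hc
        push_neg at hc
        obtain ⟨n, hn⟩ := exists_nat_one_div_lt (show (0:ℝ) < T - f x by linarith)
        have h2 := (h n).2
        linarith
    have hanti : Antitone (fun n : ℕ => {x | x ∈ E ∧ T - 1/((n:ℝ)+1) ≤ f x}) := by
      intro a b hab x hx
      have h1 : (1:ℝ)/((b:ℝ)+1) ≤ 1/((a:ℝ)+1) :=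
        one_div_le_one_div_of_le (by positivity) (add_le_add_left (Nat.cast_le.mpr hab) 1)
      have h2 := hx.2
      exact ⟨hx.1, by linarith⟩
    show ENNReal.ofReal Si ≤ volume {x | x ∈ E ∧ T ≤ f x}
    rw [hset, hanti.measure_iInter (fun n => hmeasn _) ⟨0, hfinn _⟩]
    refine le_iInf fun n => hAll _ ?_
    have h3 : (0:ℝ) < 1/((n:ℝ)+1) := by positivity
    linarith
  -- upper bound
  have hupp : μs T ≤ ENNReal.ofReal Si := by
    have hgt : ∀ s : ℝ, T < s → μs s < ENNReal.ofReal Si := by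
      intro s hs
      by_contra hc
      push_neg at hc
      exact absurd (le_csSup hbdd hc) (not_le.2 hs)
    have hset : {x | x ∈ E ∧ T < f x} = ⋃ n : ℕ, {x | x ∈ E ∧ T + 1/((n:ℝ)+1) ≤ f x} := by
      ext x
      simp only [mem_iUnion, mem_setOf_eq]
      constructor
      · intro h
        obtain ⟨n, hn⟩ := exists_nat_one_div_lt (show (0:ℝ) < f x - T by linarith [h.2])
        exact ⟨n, h.1, by linarith⟩
      · rintro ⟨n, hn⟩
        have h3 : (0:ℝ) < 1/((n:ℝ)+1) := by positivity
        exact ⟨hn.1, by linarith [hn.2]⟩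
    have hmonon : Monotone (fun n : ℕ => {x | x ∈ E ∧ T + 1/((n:ℝ)+1) ≤ f x}) := by
      intro a b hab x hx
      have h1 : (1:ℝ)/((b:ℝ)+1) ≤ 1/((a:ℝ)+1) :=
        one_div_le_one_div_of_le (by positivity) (add_le_add_left (Nat.cast_le.mpr hab) 1)
      have h2 := hx.2
      exact ⟨hx.1, by linarith⟩
    have h1 : volume {x | x ∈ E ∧ T < f x} ≤ ENNReal.ofReal Si := by
      rw [hset, hmonon.measure_iUnion]
      refine iSup_le fun n => le_of_lt (hgt _ ?_)
      have h3 : (0:ℝ) < 1/((n:ℝ)+1) := by positivity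
      linarith
    have hsplit : {x | x ∈ E ∧ T ≤ f x} ⊆ {x | x ∈ E ∧ T < f x} ∪ {x | x ∈ E ∧ f x = T} := by
      intro x hx
      rcases lt_or_eq_of_le hx.2 with h | h
      · exact Or.inl ⟨hx.1, h⟩
      · exact Or.inr ⟨hx.1, h.symm⟩
    calc μs T ≤ volume {x | x ∈ E ∧ T < f x} + volume {x | x ∈ E ∧ f x = T} :=
          le_trans (measure_mono hsplit) (measure_union_le _ _)
      _ ≤ ENNReal.ofReal Si + 0 := add_le_add h1 (le_of_eq (hlev T))
      _ = ENNReal.ofReal Si := by simp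
  exact le_antisymm hupp hlow

/-- The thresholds `t 0 > t 1 > ⋯ > t (m-2)` appearing in the
super-level-set construction are strictly decreasing: `t i = sup {s | |{x ∈ Ω \
(D̂ 0 ∪ ⋯ ∪ D̂ (i-1)) : f x ≥ s}| ≥ S i}`, `D̂ i = {x ∈ Ω \ (D̂ 0 ∪ ⋯ ∪ D̂ (i-1)) :
f x ≥ t i}`, where `f ∈ L¹(Ω)` is nonnegative with all its level sets of measure zero,
`S i > 0` for `i < m - 1` and `S 0 + ⋯ + S (m-1) = |Ω|`. -/
theorem stmt8 {N m : ℕ}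
    (Ω : Set (EuclideanSpace ℝ (Fin N)))
    (hΩ_meas : MeasurableSet Ω) (hΩ_bd : Bornology.IsBounded Ω)
    (f : EuclideanSpace ℝ (Fin N) → ℝ) (hf_meas : Measurable f)
    (hf_int : IntegrableOn f Ω) (hf_nonneg : ∀ x ∈ Ω, 0 ≤ f x)
    (hf_level : ∀ a : ℝ, volume {x ∈ Ω | f x = a} = 0)
    (S : Fin m → ℝ)
    (hS_nonneg : ∀ i, 0 ≤ S i)
    (hS_pos : ∀ i : Fin m, (i : ℕ) < m - 1 → 0 < S i)
    (hS_sum : ENNReal.ofReal (∑ i, S i) = volume Ω)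
    (t : Fin m → ℝ) (Dhat : Fin m → Set (EuclideanSpace ℝ (Fin N)))
    (ht : ∀ i : Fin m, (i : ℕ) < m - 1 →
      t i = sSup {s : ℝ |
        ENNReal.ofReal (S i) ≤
          volume {x ∈ Ω \ ⋃ j, ⋃ (_ : j < i), Dhat j | s ≤ f x}})
    (hDhat : ∀ i : Fin m, (i : ℕ) < m - 1 →
      Dhat i = {x ∈ Ω \ ⋃ j, ⋃ (_ : j < i), Dhat j | t i ≤ f x}) :
    ∀ i j : Fin m, i < j → (j : ℕ) < m - 1 → t j < t i := by
  set U : ℕ → Set (EuclideanSpace ℝ (Fin N)) :=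
    fun k => ⋃ j' : Fin m, ⋃ (_ : (j' : ℕ) < k), Dhat j' with hU
  set Es : ℕ → Set (EuclideanSpace ℝ (Fin N)) := fun k => Ω \ U k with hEs
  have hsetE : ∀ i : Fin m, (Ω \ ⋃ j', ⋃ (_ : j' < i), Dhat j') = Es (i : ℕ) := by
    intro i
    rfl
  have hΩ_fin : volume Ω ≠ ⊤ := by rw [← hS_sum]; exact ENNReal.ofReal_ne_top
  have hC : ∫⁻ x in Ω, ENNReal.ofReal (f x) ≠ ⊤ := by
    have h1 : (∫⁻ a in Ω, (‖f a‖₊ : ℝ≥0∞)) < ⊤ := hf_int.2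
    refine ne_top_of_le_ne_top h1.ne (lintegral_mono fun x => ?_)
    exact Real.ofReal_le_enorm (f x)
  have hEsub : ∀ k, Es k ⊆ Ω := fun k => diff_subset
  have hEfin : ∀ k, volume (Es k) ≠ ⊤ := fun k =>
    ne_top_of_le_ne_top hΩ_fin (measure_mono (hEsub k))
  have hf0' : ∀ k, ∀ x ∈ Es k, 0 ≤ f x := fun k x hx => hf_nonneg x (hEsub k hx)
  have hlev' : ∀ k, ∀ a : ℝ, volume {x ∈ Es k | f x = a} = 0 := by
    intro k a
    refine measure_mono_null ?_ (hf_level a)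
    intro x hx
    exact ⟨hEsub k hx.1, hx.2⟩
  have hint' : ∀ k, ∫⁻ x in Es k, ENNReal.ofReal (f x) ≠ ⊤ := fun k =>
    ne_top_of_le_ne_top hC (lintegral_mono' (Measure.restrict_mono (hEsub k) le_rfl) le_rfl)
  -- the index set split
  have hins : ∀ (i : Fin m),
      Finset.univ.filter (fun j' : Fin m => (i : ℕ) ≤ (j' : ℕ))
        = insert i (Finset.univ.filter (fun j' : Fin m => (i : ℕ) + 1 ≤ (j' : ℕ))) := by
    intro i
    ext j'
    simp only [Finset.mem_filter, Finset.mem_insert, Finset.mem_univ, true_and, Fin.ext_iff]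
    omega
  have hsum : ∀ i : Fin m,
      (∑ j' ∈ Finset.univ.filter (fun j' : Fin m => (i : ℕ) ≤ (j' : ℕ)), S j')
        = S i + ∑ j' ∈ Finset.univ.filter (fun j' : Fin m => (i : ℕ) + 1 ≤ (j' : ℕ)), S j' := by
    intro i
    rw [hins i, Finset.sum_insert (by simp)]
  -- keyfact
  have keyfact : ∀ i : Fin m, (i : ℕ) < m - 1 → MeasurableSet (Es (i : ℕ)) →
      volume (Es (i : ℕ))
        = ENNReal.ofReal (∑ j' ∈ Finset.univ.filter (fun j' : Fin m => (i : ℕ) ≤ (j' : ℕ)), S j') →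
      volume {x ∈ Es (i : ℕ) | t i ≤ f x} = ENNReal.ofReal (S i) := by
    intro i him hmeas hvol
    have hSi := hS_pos i him
    have hge : ENNReal.ofReal (S i) ≤ volume (Es (i : ℕ)) := by
      rw [hvol, hsum i]
      refine ENNReal.ofReal_le_ofReal ?_
      have h2 : (0:ℝ) ≤ ∑ j' ∈ Finset.univ.filter (fun j' : Fin m => (i : ℕ) + 1 ≤ (j' : ℕ)), S j' :=
        Finset.sum_nonneg fun _ _ => hS_nonneg _
      linarith
    have hkey := key_aux f hf_meas (Es (i : ℕ)) hmeas (hEfin _) (hf0' _) (hlev' _)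
      (hint' _) (S i) hSi hge
    rw [ht i him, hsetE i]
    exact hkey
  -- main induction
  have main : ∀ k : ℕ, k ≤ m - 1 → MeasurableSet (Es k) ∧
      volume (Es k)
        = ENNReal.ofReal (∑ j' ∈ Finset.univ.filter (fun j' : Fin m => k ≤ (j' : ℕ)), S j') := by
    intro k
    induction k with
    | zero =>
      intro _
      have hU0 : U 0 = ∅ := by
        show (⋃ j' : Fin m, ⋃ (_ : (j' : ℕ) < 0), Dhat j') = ∅
        simp
      have hE0 : Es 0 = Ω := by show Ω \ U 0 = Ω; rw [hU0, diff_empty]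
      refine ⟨by rw [hE0]; exact hΩ_meas, ?_⟩
      rw [hE0, ← hS_sum]
      congr 1
      refine Finset.sum_congr ?_ fun _ _ => rfl
      ext j'
      simp
    | succ k ih =>
      intro hk1
      obtain ⟨hmeas, hvol⟩ := ih (by omega)
      have hkm1 : k < m - 1 := by omega
      have hkm : k < m := by omega
      set i0 : Fin m := ⟨k, hkm⟩ with hi0
      have hvol' : volume (Es (i0 : ℕ))
          = ENNReal.ofReal
            (∑ j' ∈ Finset.univ.filter (fun j' : Fin m => (i0 : ℕ) ≤ (j' : ℕ)), S j') := hvol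
      have hDvol : volume {x ∈ Es k | t i0 ≤ f x} = ENNReal.ofReal (S i0) :=
        keyfact i0 hkm1 hmeas hvol'
      have hDk : Dhat i0 = {x ∈ Es k | t i0 ≤ f x} := by
        rw [hDhat i0 hkm1, hsetE i0]
      have hU1 : U (k + 1) = U k ∪ Dhat i0 := by
        show (⋃ j' : Fin m, ⋃ (_ : (j' : ℕ) < k + 1), Dhat j') = _
        ext x
        simp only [mem_iUnion, mem_union]
        constructor
        · rintro ⟨j', hj', hx⟩
          rcases Nat.lt_succ_iff_lt_or_eq.mp hj' with h | h
          · exact Or.inl (mem_iUnion.mpr ⟨j', mem_iUnion.mpr ⟨h, hx⟩⟩)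
          · refine Or.inr ?_
            have hji : j' = i0 := Fin.ext h
            rwa [← hji]
        · rintro (hx | hx)
          · simp only [hU, mem_iUnion] at hx
            obtain ⟨j', hj', hxD⟩ := hx
            exact ⟨j', Nat.lt_succ_of_lt hj', hxD⟩
          · exact ⟨i0, Nat.lt_succ_self k, hx⟩
      have hEstep : Es (k + 1) = Es k \ Dhat i0 := by
        show Ω \ U (k + 1) = (Ω \ U k) \ Dhat i0
        rw [hU1, ← Set.diff_diff]
      have hDmeas : MeasurableSet (Dhat i0) := by
        rw [hDk]
        exact hmeas.inter (measurableSet_le measurable_const hf_meas)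
      have hDsub : Dhat i0 ⊆ Es k := by
        rw [hDk]; exact fun x hx => hx.1
      have hDvol' : volume (Dhat i0) = ENNReal.ofReal (S i0) := by rw [hDk]; exact hDvol
      refine ⟨by rw [hEstep]; exact hmeas.diff hDmeas, ?_⟩
      rw [hEstep, measure_diff hDsub hDmeas.nullMeasurableSet
          (by rw [hDvol']; exact ENNReal.ofReal_ne_top), hDvol', hvol, hsum i0,
        ENNReal.ofReal_add (hS_pos i0 hkm1).le (Finset.sum_nonneg fun _ _ => hS_nonneg _),
        ENNReal.add_sub_cancel_left ENNReal.ofReal_ne_top]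
  -- conclusion
  intro i j hij hjm
  have hijn : (i : ℕ) < (j : ℕ) := hij
  have him : (i : ℕ) < m - 1 := by omega
  obtain ⟨hmeasj, hvolj⟩ := main (j : ℕ) (by omega)
  have hkeyj : volume {x ∈ Es (j : ℕ) | t j ≤ f x} = ENNReal.ofReal (S j) :=
    keyfact j hjm hmeasj hvolj
  have hDi : Dhat i = {x ∈ Es (i : ℕ) | t i ≤ f x} := by
    rw [hDhat i him, hsetE i]
  have hempty : {x ∈ Es (j : ℕ) | t i ≤ f x} = (∅ : Set (EuclideanSpace ℝ (Fin N))) := by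
    ext x
    simp only [mem_setOf_eq, mem_empty_iff_false, iff_false, not_and]
    intro hx hti
    have hxj : x ∈ Ω \ U (j : ℕ) := hx
    have hxi : x ∈ Es (i : ℕ) := by
      refine ⟨hxj.1, fun hcmem => hxj.2 ?_⟩
      have hcm : x ∈ ⋃ j' : Fin m, ⋃ (_ : (j' : ℕ) < (i : ℕ)), Dhat j' := hcmem
      show x ∈ ⋃ j' : Fin m, ⋃ (_ : (j' : ℕ) < (j : ℕ)), Dhat j'
      simp only [mem_iUnion] at hcm ⊢
      obtain ⟨j', hj', hxD⟩ := hcm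
      exact ⟨j', by omega, hxD⟩
    have hxD : x ∈ Dhat i := by rw [hDi]; exact ⟨hxi, hti⟩
    refine hxj.2 ?_
    show x ∈ ⋃ j' : Fin m, ⋃ (_ : (j' : ℕ) < (j : ℕ)), Dhat j'
    simp only [mem_iUnion]
    exact ⟨i, hijn, hxD⟩
  by_contra hcon
  push_neg at hcon
  have hsub : {x ∈ Es (j : ℕ) | t j ≤ f x} ⊆ {x ∈ Es (j : ℕ) | t i ≤ f x} :=
    fun x hx => ⟨hx.1, le_trans hcon hx.2⟩
  have h0 : ENNReal.ofReal (S j) ≤ 0 := by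
    rw [← hkeyj]
    calc volume {x ∈ Es (j : ℕ) | t j ≤ f x}
        ≤ volume {x ∈ Es (j : ℕ) | t i ≤ f x} := measure_mono hsub
      _ = 0 := by rw [hempty]; exact measure_empty
  have hpos := hS_pos j hjm
  simp only [nonpos_iff_eq_zero, ENNReal.ofReal_eq_zero] at h0
  linarith
end

section
/- Let ρ₀ ∈ P and let f ∈ L¹(Ω) be nonnegative with all level sets {x ∈ Ω : f(x) = c} of Lebesgue measure zero. Then there exists ρ₁ ∈ P such that ∫_Ω ρ₀ f dx ≤ ∫_Ω ρ₁ f dx, and moreover ρ₁ can be taken of the form c₁χ_{D̂₁} + ⋯ + c_m χ_{D̂_m} where D̂₁, …, D̂_m are pairwise disjoint measurable sets obtained from the sub-level sets of f, with |D̂_i| = S_i and ⋃_{i=1}^m D̂_i = Ω. -/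
open MeasureTheory Set
open scoped ENNReal NNReal

lemma step_val {N m : ℕ} (c : Fin m → ℝ) {E : Fin m → Set (EuclideanSpace ℝ (Fin N))}
    (hdisj : Pairwise (Function.onFun Disjoint E)) {j : Fin m}
    {x : EuclideanSpace ℝ (Fin N)} (hx : x ∈ E j) :
    ∑ i, (E i).indicator (fun _ => c i) x = c j := by
  rw [Finset.sum_eq_single j]
  · exact Set.indicator_of_mem hx _
  · intro i _ hij
    exact Set.indicator_of_notMem
      (fun hxi => Set.disjoint_left.1 (hdisj hij) hxi hx) _
  · intro h; exact absurd (Finset.mem_univ j) h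

lemma step_super {N m : ℕ} (c : Fin m → ℝ) {Ω : Set (EuclideanSpace ℝ (Fin N))}
    {E : Fin m → Set (EuclideanSpace ℝ (Fin N))}
    (hdisj : Pairwise (Function.onFun Disjoint E))
    (hunion : (⋃ i, E i) = Ω) (r : ℝ) :
    {x ∈ Ω | r ≤ ∑ i, (E i).indicator (fun _ => c i) x} =
      ⋃ i, if r ≤ c i then E i else ∅ := by
  ext x
  simp only [Set.mem_setOf_eq, Set.mem_iUnion]
  constructor
  · rintro ⟨hxΩ, hr⟩
    rw [← hunion] at hxΩ
    obtain ⟨j, hj⟩ := Set.mem_iUnion.1 hxΩ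
    rw [step_val c hdisj hj] at hr
    exact ⟨j, by rw [if_pos hr]; exact hj⟩
  · rintro ⟨j, hj⟩
    by_cases hr : r ≤ c j
    · rw [if_pos hr] at hj
      have hxΩ : x ∈ Ω := hunion ▸ Set.mem_iUnion.2 ⟨j, hj⟩
      exact ⟨hxΩ, by rw [step_val c hdisj hj]; exact hr⟩
    · rw [if_neg hr] at hj; exact absurd hj (Set.notMem_empty x)

lemma step_super_vol {N m : ℕ} (c : Fin m → ℝ) (S : Fin m → ℝ)
    {Ω : Set (EuclideanSpace ℝ (Fin N))} {E : Fin m → Set (EuclideanSpace ℝ (Fin N))}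
    (hmeas : ∀ i, MeasurableSet (E i))
    (hdisj : Pairwise (Function.onFun Disjoint E))
    (hunion : (⋃ i, E i) = Ω)
    (hvol : ∀ i, volume (E i) = ENNReal.ofReal (S i)) (r : ℝ) :
    volume {x ∈ Ω | r ≤ ∑ i, (E i).indicator (fun _ => c i) x} =
      ∑ i, if r ≤ c i then ENNReal.ofReal (S i) else 0 := by
  rw [step_super c hdisj hunion r, measure_iUnion]
  · rw [tsum_fintype]
    congr 1; ext i
    split_ifs with h
    · exact hvol i
    · exact measure_empty
  · intro i j hij
    refine Disjoint.mono ?_ ?_ (hdisj hij) <;> · dsimp only; split_ifs <;> simp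
  · intro i; split_ifs; exacts [hmeas i, MeasurableSet.empty]

lemma bathtub {N : ℕ} {Ω : Set (EuclideanSpace ℝ (Fin N))} (hΩ : MeasurableSet Ω)
    (hΩfin : volume Ω ≠ ⊤) {f : EuclideanSpace ℝ (Fin N) → ℝ} (hf : Measurable f)
    {A : Set (EuclideanSpace ℝ (Fin N))} (hA : MeasurableSet A) (hAΩ : A ⊆ Ω)
    {τ : ℝ} (hτ : 0 ≤ τ)
    (hvol : volume A = volume {x ∈ Ω | τ ≤ f x}) :
    ∫⁻ x in A, ENNReal.ofReal (f x) ≤ ∫⁻ x in {x ∈ Ω | τ ≤ f x}, ENNReal.ofReal (f x) := by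
  set B : Set (EuclideanSpace ℝ (Fin N)) := {x ∈ Ω | τ ≤ f x} with hBdef
  have hB : MeasurableSet B := hΩ.inter (measurableSet_le measurable_const hf)
  have hBΩ : B ⊆ Ω := fun x hx => hx.1
  have hfinA : volume A ≠ ⊤ := fun h => hΩfin (top_le_iff.1 (h ▸ measure_mono hAΩ))
  have hfinAB : volume (A ∩ B) ≠ ⊤ :=
    fun h => hfinA (top_le_iff.1 (h ▸ measure_mono Set.inter_subset_left))
  -- |A \ B| = |B \ A|
  have hdiff : volume (A \ B) = volume (B \ A) := by
    have h1 : volume (A \ B) + volume (A ∩ B) = volume A := measure_diff_add_inter A hB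
    have h2 : volume (B \ A) + volume (B ∩ A) = volume B := measure_diff_add_inter B hA
    rw [Set.inter_comm] at h2
    rw [hvol, ← h2] at h1
    exact (ENNReal.add_left_inj hfinAB).1 h1
  -- split integrals
  have hsplitA : ∫⁻ x in A, ENNReal.ofReal (f x) =
      (∫⁻ x in A ∩ B, ENNReal.ofReal (f x)) + ∫⁻ x in A \ B, ENNReal.ofReal (f x) :=
    (lintegral_inter_add_diff _ A hB).symm
  have hsplitB : ∫⁻ x in B, ENNReal.ofReal (f x) =
      (∫⁻ x in B ∩ A, ENNReal.ofReal (f x)) + ∫⁻ x in B \ A, ENNReal.ofReal (f x) :=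
    (lintegral_inter_add_diff _ B hA).symm
  have hub : ∫⁻ x in A \ B, ENNReal.ofReal (f x) ≤ ENNReal.ofReal τ * volume (A \ B) := by
    calc ∫⁻ x in A \ B, ENNReal.ofReal (f x)
        ≤ ∫⁻ _x in A \ B, ENNReal.ofReal τ := by
          refine setLIntegral_mono measurable_const ?_
          intro x hx
          have hxΩ : x ∈ Ω := hAΩ hx.1
          have : ¬ τ ≤ f x := fun h => hx.2 ⟨hxΩ, h⟩
          exact ENNReal.ofReal_le_ofReal (le_of_lt (not_le.1 this))
      _ = ENNReal.ofReal τ * volume (A \ B) := by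
          rw [setLIntegral_const, mul_comm]
  have hlb : ENNReal.ofReal τ * volume (B \ A) ≤ ∫⁻ x in B \ A, ENNReal.ofReal (f x) := by
    calc ENNReal.ofReal τ * volume (B \ A)
        = ∫⁻ _x in B \ A, ENNReal.ofReal τ := by rw [setLIntegral_const, mul_comm]
      _ ≤ ∫⁻ x in B \ A, ENNReal.ofReal (f x) := by
          refine setLIntegral_mono hf.ennreal_ofReal ?_
          intro x hx
          exact ENNReal.ofReal_le_ofReal hx.1.2
  calc ∫⁻ x in A, ENNReal.ofReal (f x)
      = (∫⁻ x in A ∩ B, ENNReal.ofReal (f x)) + ∫⁻ x in A \ B, ENNReal.ofReal (f x) := hsplitA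
    _ ≤ (∫⁻ x in A ∩ B, ENNReal.ofReal (f x)) + ENNReal.ofReal τ * volume (A \ B) := by gcongr
    _ = (∫⁻ x in B ∩ A, ENNReal.ofReal (f x)) + ENNReal.ofReal τ * volume (B \ A) := by
        rw [Set.inter_comm, hdiff]
    _ ≤ (∫⁻ x in B ∩ A, ENNReal.ofReal (f x)) + ∫⁻ x in B \ A, ENNReal.ofReal (f x) := by gcongr
    _ = ∫⁻ x in B, ENNReal.ofReal (f x) := hsplitB.symm

/-- For any `ρ₀` in the rearrangement class `P` generated by a step
function, and any nonnegative `f ∈ L¹(Ω)` whose level sets are null, there is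
`ρ₁ ∈ P` with `∫_Ω ρ₀ f ≤ ∫_Ω ρ₁ f`; moreover `ρ₁` can be taken to be a step function
`∑ i, c i • χ_{D̂ i}` on a measurable partition `D̂` of `Ω` with `|D̂ i| = S i`, built from
the sub-level sets of `f` (so that `f` is smaller on `D̂ i` than on `D̂ j` for `i < j`). -/
theorem stmt13 {N m : ℕ}
    (Ω : Set (EuclideanSpace ℝ (Fin N)))
    (hΩ_meas : MeasurableSet Ω) (hΩ_bd : Bornology.IsBounded Ω)
    (c : Fin m → ℝ) (hc_pos : ∀ i, 0 < c i) (hc_mono : StrictMono c)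
    (S : Fin m → ℝ) (hS_pos : ∀ i, 0 < S i)
    (D : Fin m → Set (EuclideanSpace ℝ (Fin N)))
    (hD_meas : ∀ i, MeasurableSet (D i))
    (hD_disj : Pairwise (Function.onFun Disjoint D))
    (hD_union : (⋃ i, D i) = Ω)
    (hD_vol : ∀ i, volume (D i) = ENNReal.ofReal (S i))
    (ρ₀ : EuclideanSpace ℝ (Fin N) → ℝ) (hρ₀_meas : Measurable ρ₀)
    (hρ₀_mem : ∀ r : ℝ, volume {x ∈ Ω | r ≤ ρ₀ x} =
      volume {x ∈ Ω | r ≤ ∑ i, (D i).indicator (fun _ => c i) x})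
    (f : EuclideanSpace ℝ (Fin N) → ℝ) (hf_meas : Measurable f)
    (hf_int : IntegrableOn f Ω) (hf_nonneg : ∀ x ∈ Ω, 0 ≤ f x)
    (hf_level : ∀ a : ℝ, volume {x ∈ Ω | f x = a} = 0) :
    ∃ Dhat : Fin m → Set (EuclideanSpace ℝ (Fin N)),
      (∀ i, MeasurableSet (Dhat i)) ∧
      Pairwise (Function.onFun Disjoint Dhat) ∧
      (∀ i, volume (Dhat i) = ENNReal.ofReal (S i)) ∧
      (⋃ i, Dhat i) = Ω ∧
      (∀ i j : Fin m, i < j → ∀ y ∈ Dhat i, ∀ x ∈ Dhat j, f y ≤ f x) ∧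
      (∀ r : ℝ,
        volume {x ∈ Ω | r ≤ ∑ i, (Dhat i).indicator (fun _ => c i) x} =
          volume {x ∈ Ω | r ≤ ∑ i, (D i).indicator (fun _ => c i) x}) ∧
      (∫ x in Ω, ρ₀ x * f x) ≤
        ∫ x in Ω, (∑ i, (Dhat i).indicator (fun _ => c i) x) * f x := by
  classical
  rcases Nat.eq_zero_or_pos m with hm | hm
  · subst hm
    have hΩ_empty : Ω = ∅ := by rw [← hD_union]; simp
    refine ⟨D, hD_meas, hD_disj, hD_vol, hD_union, fun i => i.elim0, fun r => rfl, ?_⟩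
    rw [hΩ_empty]
    simp
  have hΩ_fin : volume Ω ≠ ⊤ := hΩ_bd.measure_lt_top.ne
  -- partial sums
  set Sn : ℕ → ℝ := fun k => if h : k < m then S ⟨k, h⟩ else 0 with hSn
  set σ : ℕ → ℝ := fun k => ∑ i ∈ Finset.range k, Sn i with hσdef
  have hSn_nonneg : ∀ k, 0 ≤ Sn k := by
    intro k; simp only [hSn]; split_ifs with h
    · exact (hS_pos _).le
    · exact le_refl 0
  have hσ_succ : ∀ k, σ (k + 1) = σ k + Sn k := by
    intro k; simp only [hσdef, Finset.sum_range_succ]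
  have hσ_mono : Monotone σ := by
    intro a b hab
    simp only [hσdef]
    exact Finset.sum_le_sum_of_subset_of_nonneg (Finset.range_subset_range.2 hab)
      (fun i _ _ => hSn_nonneg i)
  have hσ_nonneg : ∀ k, 0 ≤ σ k :=
    fun k => Finset.sum_nonneg fun i _ => hSn_nonneg i
  have hσm : ENNReal.ofReal (σ m) = volume Ω := by
    have h1 : volume Ω = ∑ i, volume (D i) := by
      rw [← hD_union, measure_iUnion hD_disj (fun i => hD_meas i), tsum_fintype]
    have h2 : σ m = ∑ i, S i := by
      simp only [hσdef]
      rw [← Fin.sum_univ_eq_sum_range]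
      refine Finset.sum_congr rfl fun i _ => ?_
      simp only [hSn, dif_pos i.isLt]
    rw [h2, h1]
    rw [ENNReal.ofReal_sum_of_nonneg (fun i _ => (hS_pos i).le)]
    exact Finset.sum_congr rfl fun i _ => (hD_vol i).symm
  have hσ_lt : ∀ k, k < m → σ k < σ m := by
    intro k hk
    have h1 : σ k + Sn k ≤ σ m := by
      rw [← hσ_succ]; exact hσ_mono hk
    have h2 : 0 < Sn k := by simp only [hSn, dif_pos hk]; exact hS_pos _
    linarith
  -- distribution function of f
  set F : ℝ → ℝ≥0∞ := fun t => volume {x ∈ Ω | f x < t} with hFdef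
  have hF_mono : Monotone F := by
    intro a b hab
    exact measure_mono fun x hx => ⟨hx.1, lt_of_lt_of_le hx.2 hab⟩
  have hF_zero : ∀ t ≤ 0, F t = 0 := by
    intro t ht
    refine measure_mono_null ?_ (measure_empty (μ := volume))
    intro x hx
    exact absurd (lt_of_lt_of_le hx.2 ht) (not_lt.2 (hf_nonneg x hx.1))
  have hsub_meas : ∀ t : ℝ, MeasurableSet {x ∈ Ω | f x < t} := by
    intro t
    exact hΩ_meas.inter (measurableSet_lt hf_meas measurable_const)
  -- F tends to volume Ω along ℕ
  have hF_tendsto : Filter.Tendsto (fun n : ℕ => F n) Filter.atTop (nhds (volume Ω)) := by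
    have hmono : Monotone (fun n : ℕ => {x ∈ Ω | f x < (n : ℝ)}) := by
      intro a b hab x hx
      exact ⟨hx.1, lt_of_lt_of_le hx.2 (Nat.cast_le.2 hab)⟩
    have hU : (⋃ n : ℕ, {x ∈ Ω | f x < (n : ℝ)}) = Ω := by
      ext x
      simp only [Set.mem_iUnion, Set.mem_setOf_eq]
      constructor
      · rintro ⟨n, hn, _⟩; exact hn
      · intro hx
        obtain ⟨n, hn⟩ := exists_nat_gt (f x)
        exact ⟨n, hx, hn⟩
    have := tendsto_measure_iUnion_atTop (μ := volume) hmono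
    rw [hU] at this
    exact this
  -- existence of a "large" point of F
  have hσm1_lt : ENNReal.ofReal (σ (m - 1)) < volume Ω := by
    rw [← hσm]
    exact ENNReal.ofReal_lt_ofReal_iff_of_nonneg (hσ_nonneg _) |>.2
      (hσ_lt _ (Nat.sub_lt hm Nat.one_pos))
  obtain ⟨n₀, hn₀⟩ : ∃ n : ℕ, ENNReal.ofReal (σ (m - 1)) < F n :=
    (hF_tendsto.eventually (eventually_gt_nhds hσm1_lt)).exists
  -- thresholds
  set Tset : ℕ → Set ℝ := fun k => {t : ℝ | ENNReal.ofReal (σ k) ≤ F t} with hTdef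
  set τ : ℕ → ℝ := fun k => if k = 0 then 0 else sInf (Tset k) with hτdef
  have hT_ne : ∀ k ≤ m - 1, (Tset k).Nonempty := by
    intro k hk
    exact ⟨n₀, le_trans (ENNReal.ofReal_le_ofReal (hσ_mono hk)) hn₀.le⟩
  have hσk_pos : ∀ k, 1 ≤ k → 0 < σ k := by
    intro k hk
    have h1 : 0 < σ 1 := by
      have : σ 1 = Sn 0 := by simp only [hσdef]; simp
      rw [this]; simp only [hSn, dif_pos hm]; exact hS_pos _
    exact lt_of_lt_of_le h1 (hσ_mono hk)
  have hT_lb : ∀ k, 1 ≤ k → ∀ t ∈ Tset k, (0:ℝ) ≤ t := by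
    intro k hk t ht
    by_contra hlt
    push_neg at hlt
    simp only [hTdef, Set.mem_setOf_eq] at ht
    have h0 : F t = 0 := hF_zero t hlt.le
    rw [h0] at ht
    rw [nonpos_iff_eq_zero, ENNReal.ofReal_eq_zero] at ht
    exact absurd ht (not_le.2 (hσk_pos k hk))
  have hT_bdd : ∀ k, 1 ≤ k → BddBelow (Tset k) := fun k hk => ⟨0, hT_lb k hk⟩
  have hτ_nonneg : ∀ k ≤ m - 1, 0 ≤ τ k := by
    intro k hk
    simp only [hτdef]
    split_ifs with h
    · exact le_refl 0
    · exact le_csInf (hT_ne k hk) (hT_lb k (Nat.one_le_iff_ne_zero.2 h))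
  have hτ_mono : ∀ a b, a ≤ b → b ≤ m - 1 → τ a ≤ τ b := by
    intro a b hab hb
    rcases Nat.eq_zero_or_pos a with ha | ha
    · subst ha
      have : τ 0 = 0 := by simp only [hτdef]; simp
      rw [this]; exact hτ_nonneg b hb
    · have hb1 : 1 ≤ b := le_trans ha hab
      have e1 : τ a = sInf (Tset a) := by
        simp only [hτdef]; rw [if_neg (Nat.one_le_iff_ne_zero.1 ha)]
      have e2 : τ b = sInf (Tset b) := by
        simp only [hτdef]; rw [if_neg (Nat.one_le_iff_ne_zero.1 hb1)]
      rw [e1, e2]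
      refine csInf_le_csInf (hT_bdd a ha) (hT_ne b hb) ?_
      intro t ht
      exact le_trans (ENNReal.ofReal_le_ofReal (hσ_mono hab)) ht
  -- key: F (τ k) = ofReal (σ k) for k ≤ m - 1
  have hkey : ∀ k ≤ m - 1, F (τ k) = ENNReal.ofReal (σ k) := by
    intro k hk
    rcases Nat.eq_zero_or_pos k with h0 | h1
    · subst h0
      have e : τ 0 = 0 := by simp only [hτdef]; simp
      have e2 : σ 0 = 0 := by simp only [hσdef]; simp
      rw [e, e2, hF_zero 0 le_rfl, ENNReal.ofReal_zero]
    have hne := hT_ne k hk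
    have hbdd := hT_bdd k h1
    have hτk : τ k = sInf (Tset k) := by
      simp only [hτdef]; rw [if_neg (Nat.one_le_iff_ne_zero.1 h1)]
    -- F t ≤ ofReal σ k for t < τ k
    have hlt : ∀ t : ℝ, t < τ k → F t ≤ ENNReal.ofReal (σ k) := by
      intro t ht
      rw [hτk] at ht
      have : t ∉ Tset k := fun hmem => absurd (csInf_le hbdd hmem) (not_le.2 ht)
      simp only [hTdef, Set.mem_setOf_eq, not_le] at this
      exact this.le
    -- F t ≥ ofReal σ k for t > τ k
    have hgt : ∀ t : ℝ, τ k < t → ENNReal.ofReal (σ k) ≤ F t := by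
      intro t ht
      rw [hτk] at ht
      obtain ⟨s, hs, hst⟩ := exists_lt_of_csInf_lt hne ht
      exact le_trans hs (hF_mono hst.le)
    refine le_antisymm ?_ ?_
    · -- F(τ k) ≤ ofReal σ k  via union from below
      have hU : (⋃ n : ℕ, {x ∈ Ω | f x < τ k - 1/(n+1)}) = {x ∈ Ω | f x < τ k} := by
        ext x
        simp only [Set.mem_iUnion, Set.mem_setOf_eq]
        constructor
        · rintro ⟨n, hxΩ, hn⟩
          refine ⟨hxΩ, lt_of_lt_of_le hn ?_⟩
          have h0 : (0:ℝ) < 1/((n:ℝ)+1) := by positivity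
          linarith
        · rintro ⟨hxΩ, hx⟩
          obtain ⟨n, hn⟩ := exists_nat_one_div_lt (sub_pos.2 hx)
          exact ⟨n, hxΩ, by push_cast at hn ⊢; linarith⟩
      have hmono : Monotone (fun n : ℕ => {x ∈ Ω | f x < τ k - 1/(n+1)}) := by
        intro a b hab x hx
        refine ⟨hx.1, lt_of_lt_of_le hx.2 ?_⟩
        have hab' : (a:ℝ) + 1 ≤ (b:ℝ) + 1 := by
          have : a + 1 ≤ b + 1 := by omega
          exact_mod_cast this
        have h1 : (1:ℝ)/((b:ℝ)+1) ≤ 1/((a:ℝ)+1) :=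
          one_div_le_one_div_of_le (by positivity) hab'
        linarith
      have htd := tendsto_measure_iUnion_atTop (μ := volume) hmono
      rw [hU] at htd
      refine le_of_tendsto htd (Filter.Eventually.of_forall fun n => ?_)
      apply hlt
      have h0 : (0:ℝ) < 1/((n:ℝ)+1) := by positivity
      linarith
    · -- ofReal σ k ≤ F (τ k)
      have hle : volume {x ∈ Ω | f x ≤ τ k} ≤ F (τ k) := by
        have hsplit : {x ∈ Ω | f x ≤ τ k} ⊆ {x ∈ Ω | f x < τ k} ∪ {x ∈ Ω | f x = τ k} := by
          intro x hx
          rcases lt_or_eq_of_le hx.2 with h | h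
          · exact Or.inl ⟨hx.1, h⟩
          · exact Or.inr ⟨hx.1, h⟩
        calc volume {x ∈ Ω | f x ≤ τ k}
            ≤ volume ({x ∈ Ω | f x < τ k} ∪ {x ∈ Ω | f x = τ k}) := measure_mono hsplit
          _ ≤ F (τ k) + volume {x ∈ Ω | f x = τ k} := measure_union_le _ _
          _ = F (τ k) := by rw [hf_level (τ k), add_zero]
      refine le_trans ?_ hle
      have hInt : (⋂ n : ℕ, {x ∈ Ω | f x < τ k + 1/(n+1)}) = {x ∈ Ω | f x ≤ τ k} := by
        ext x
        simp only [Set.mem_iInter, Set.mem_setOf_eq]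
        constructor
        · intro h
          refine ⟨(h 0).1, ?_⟩
          by_contra hgt'
          push_neg at hgt'
          obtain ⟨n, hn⟩ := exists_nat_one_div_lt (sub_pos.2 hgt')
          have := (h n).2
          push_cast at hn
          linarith
        · intro h n
          have h0 : (0:ℝ) < 1/((n:ℝ)+1) := by positivity
          exact ⟨h.1, by linarith [h.2]⟩
      have hanti : Antitone (fun n : ℕ => {x ∈ Ω | f x < τ k + 1/(n+1)}) := by
        intro a b hab x hx
        refine ⟨hx.1, lt_of_lt_of_le hx.2 ?_⟩
        have hab' : (a:ℝ) + 1 ≤ (b:ℝ) + 1 := by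
          have : a + 1 ≤ b + 1 := by omega
          exact_mod_cast this
        have h1 : (1:ℝ)/((b:ℝ)+1) ≤ 1/((a:ℝ)+1) :=
          one_div_le_one_div_of_le (by positivity) hab'
        linarith
      have hfin0 : volume {x ∈ Ω | f x < τ k + 1/((0:ℕ)+1)} ≠ ⊤ :=
        fun h => hΩ_fin (top_le_iff.1 (h ▸ measure_mono fun x hx => hx.1))
      have htd := tendsto_measure_iInter_atTop (μ := volume)
        (fun n => (hsub_meas _).nullMeasurableSet) hanti ⟨0, hfin0⟩
      rw [hInt] at htd
      refine ge_of_tendsto htd (Filter.Eventually.of_forall fun n => ?_)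
      apply hgt
      have h0 : (0:ℝ) < 1/((n:ℝ)+1) := by positivity
      linarith
  -- sublevel sets
  set A : ℕ → Set (EuclideanSpace ℝ (Fin N)) := fun k => if k < m then {x ∈ Ω | f x < τ k} else Ω with hAdef
  have hA_meas : ∀ k, MeasurableSet (A k) := by
    intro k; simp only [hAdef]; split_ifs
    · exact hsub_meas _
    · exact hΩ_meas
  have hA_sub : ∀ k, A k ⊆ Ω := by
    intro k; simp only [hAdef]; split_ifs
    · exact fun x hx => hx.1
    · exact le_refl Ω
  have hA_zero : A 0 = ∅ := by
    simp only [hAdef]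
    simp only [if_pos hm]
    have hτ0 : τ 0 = 0 := by simp only [hτdef]; simp
    ext x
    simp only [Set.mem_setOf_eq, Set.mem_empty_iff_false, iff_false, not_and, not_lt]
    intro hx
    rw [hτ0]
    exact hf_nonneg x hx
  have hA_mono : ∀ a b, a ≤ b → A a ⊆ A b := by
    intro a b hab
    simp only [hAdef]
    split_ifs with ha hb hb
    · intro x hx
      refine ⟨hx.1, lt_of_lt_of_le hx.2 ?_⟩
      exact hτ_mono a b hab (by omega)
    · exact fun x hx => hx.1
    · omega
    · exact le_refl Ω
  have hA_vol : ∀ k ≤ m, volume (A k) = ENNReal.ofReal (σ k) := by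
    intro k hk
    rcases lt_or_eq_of_le hk with h | h
    · simp only [hAdef]; rw [if_pos h]
      exact hkey k (by omega)
    · subst h; simp only [hAdef]; rw [if_neg (lt_irrefl k)]
      exact hσm.symm
  have hA_super : ∀ k < m, Ω \ A k = {x ∈ Ω | τ k ≤ f x} := by
    intro k hk
    simp only [hAdef]
    rw [if_pos hk]
    ext x
    simp only [Set.mem_diff, Set.mem_setOf_eq, not_and, not_lt]
    constructor
    · rintro ⟨hxΩ, h⟩; exact ⟨hxΩ, h hxΩ⟩
    · rintro ⟨hxΩ, h⟩; exact ⟨hxΩ, fun _ => h⟩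
  -- the new partition
  set Dhat : Fin m → Set (EuclideanSpace ℝ (Fin N)) := fun i => A (i.val + 1) \ A i.val with hDhatdef
  have hDhat_meas : ∀ i, MeasurableSet (Dhat i) :=
    fun i => (hA_meas _).diff (hA_meas _)
  have hDhat_sub : ∀ i, Dhat i ⊆ Ω := fun i x hx => hA_sub _ hx.1
  have hDhat_disj : Pairwise (Function.onFun Disjoint Dhat) := by
    have key : ∀ i j : Fin m, i < j → Disjoint (Dhat i) (Dhat j) := by
      intro i j hij
      rw [Set.disjoint_left]
      intro x hxi hxj
      have h1 : x ∈ A (i.val + 1) := hxi.1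
      have h2 : x ∈ A j.val := hA_mono _ _ (by exact_mod_cast hij) h1
      exact hxj.2 h2
    intro i j hij
    rcases lt_or_gt_of_ne hij with h | h
    · exact key i j h
    · exact (key j i h).symm
  have hDhat_vol : ∀ i, volume (Dhat i) = ENNReal.ofReal (S i) := by
    intro i
    simp only [hDhatdef]
    rw [measure_diff (hA_mono _ _ (Nat.le_succ _)) (hA_meas _).nullMeasurableSet
      (fun h => hΩ_fin (top_le_iff.1 (h ▸ measure_mono (hA_sub _))))]
    rw [hA_vol (i.val + 1) (Nat.succ_le_of_lt i.isLt), hA_vol i.val i.isLt.le]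
    rw [← ENNReal.ofReal_sub _ (hσ_nonneg _)]
    congr 1
    rw [hσ_succ]
    have : Sn i.val = S i := by simp only [hSn, dif_pos i.isLt]
    rw [this]; ring
  have hA_top : A m = Ω := by simp only [hAdef]; simp
  -- telescoping union
  have hunion_tail : ∀ j : ℕ, j ≤ m →
      (⋃ (i : Fin m) (_ : j ≤ i.val), Dhat i) = Ω \ A j := by
    intro j hj
    ext x
    simp only [Set.mem_iUnion, Set.mem_diff]
    constructor
    · rintro ⟨i, hji, hx⟩
      refine ⟨hDhat_sub i hx, fun hxj => ?_⟩
      exact hx.2 (hA_mono _ _ hji hxj)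
    · rintro ⟨hxΩ, hxj⟩
      have hex : ∃ k, x ∈ A k := ⟨m, hA_top ▸ hxΩ⟩
      set k := Nat.find hex with hkdef
      have hxk : x ∈ A k := Nat.find_spec hex
      have hkm : k ≤ m := Nat.find_le (hA_top ▸ hxΩ)
      have hkj : j < k := by
        by_contra hle
        push_neg at hle
        exact hxj (hA_mono _ _ hle hxk)
      have hk1 : k - 1 < m := by omega
      refine ⟨⟨k - 1, hk1⟩, by simp; omega, ?_⟩
      simp only [hDhatdef]
      have hk1' : k - 1 + 1 = k := by omega
      rw [hk1']
      exact ⟨hxk, Nat.find_min hex (by omega)⟩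
  have hDhat_union : (⋃ i, Dhat i) = Ω := by
    have h0 := hunion_tail 0 (Nat.zero_le m)
    rw [hA_zero, Set.diff_empty] at h0
    rw [← h0]
    ext x
    simp only [Set.mem_iUnion]
    exact ⟨fun ⟨i, hi⟩ => ⟨i, Nat.zero_le _, hi⟩, fun ⟨i, _, hi⟩ => ⟨i, hi⟩⟩
  -- ordering property
  have hDhat_order : ∀ i j : Fin m, i < j → ∀ y ∈ Dhat i, ∀ x ∈ Dhat j, f y ≤ f x := by
    intro i j hij y hy x hx
    have hij' : i.val + 1 ≤ j.val := by exact_mod_cast hij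
    have hy1 : y ∈ A (i.val + 1) := hy.1
    have hiA : i.val + 1 < m := lt_of_le_of_lt hij' j.isLt
    simp only [hAdef] at hy1
    rw [if_pos hiA] at hy1
    have hx2 : x ∉ A j.val := hx.2
    have hxΩ : x ∈ Ω := hDhat_sub j hx
    simp only [hAdef] at hx2
    rw [if_pos j.isLt] at hx2
    have hxt : τ j.val ≤ f x := by
      by_contra h
      push_neg at h
      exact hx2 ⟨hxΩ, h⟩
    have hmono : τ (i.val + 1) ≤ τ j.val := hτ_mono _ _ hij' (by omega)
    linarith [hy1.2]
  -- distribution equality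
  have hDhat_dist : ∀ r : ℝ,
      volume {x ∈ Ω | r ≤ ∑ i, (Dhat i).indicator (fun _ => c i) x} =
        volume {x ∈ Ω | r ≤ ∑ i, (D i).indicator (fun _ => c i) x} := by
    intro r
    rw [step_super_vol c S hDhat_meas hDhat_disj hDhat_union hDhat_vol r,
      step_super_vol c S hD_meas hD_disj hD_union hD_vol r]
  refine ⟨Dhat, hDhat_meas, hDhat_disj, hDhat_vol, hDhat_union, hDhat_order, hDhat_dist, ?_⟩
  -- ======== the integral inequality ========
  -- the step function on Dhat
  have hρ₁_meas : Measurable (fun x : (EuclideanSpace ℝ (Fin N)) => ∑ i, (Dhat i).indicator (fun _ => c i) x) := by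
    apply Finset.measurable_sum
    intro i _
    exact Measurable.indicator measurable_const (hDhat_meas i)
  have hρ₁_nonneg : ∀ x : (EuclideanSpace ℝ (Fin N)), 0 ≤ ∑ i, (Dhat i).indicator (fun _ => c i) x := fun x =>
    Finset.sum_nonneg fun i _ => Set.indicator_nonneg (fun _ _ => (hc_pos i).le) x
  set i0 : Fin m := ⟨0, hm⟩ with hi0
  have hσ_sum : σ m = ∑ i, S i := by
    simp only [hσdef]; rw [ ← Fin.sum_univ_eq_sum_range]
    exact Finset.sum_congr rfl fun i _ => by simp only [hSn, dif_pos i.isLt]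
  -- ρ₀ ≥ c i0 a.e. on Ω
  have hvolS : volume {x ∈ Ω | c i0 ≤ ρ₀ x} = volume Ω := by
    rw [hρ₀_mem (c i0), step_super_vol c S hD_meas hD_disj hD_union hD_vol]
    have hle : ∀ i : Fin m, c i0 ≤ c i := fun i =>
      hc_mono.monotone (by rw [hi0]; exact Fin.mk_le_of_le_val (Nat.zero_le _))
    rw [Finset.sum_congr rfl fun i _ => if_pos (hle i)]
    rw [← hσm, hσ_sum, ENNReal.ofReal_sum_of_nonneg (fun i _ => (hS_pos i).le)]
  have hSmeas : MeasurableSet {x ∈ Ω | c i0 ≤ ρ₀ x} :=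
    hΩ_meas.inter (measurableSet_le measurable_const hρ₀_meas)
  have hnull : volume (Ω \ {x ∈ Ω | c i0 ≤ ρ₀ x}) = 0 := by
    rw [measure_diff (fun x hx => hx.1) hSmeas.nullMeasurableSet
      (fun h => hΩ_fin (top_le_iff.1 (h ▸ measure_mono fun x hx => hx.1))), hvolS, tsub_self]
  have hρ₀_ae : ∀ᵐ x ∂(volume.restrict Ω), c i0 ≤ ρ₀ x := by
    rw [ae_restrict_iff' hΩ_meas, ae_iff]
    refine measure_mono_null ?_ hnull
    intro x hx
    simp only [Set.mem_setOf_eq] at hx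
    push_neg at hx
    exact ⟨hx.1, fun h => absurd h.2 (not_le.2 hx.2)⟩
  have hρ₀_ae_nonneg : ∀ᵐ x ∂(volume.restrict Ω), 0 ≤ ρ₀ x := by
    filter_upwards [hρ₀_ae] with x hx
    exact le_trans (hc_pos i0).le hx
  -- the weighted measure
  set ν : Measure (EuclideanSpace ℝ (Fin N)) := (volume.restrict Ω).withDensity (fun x => ENNReal.ofReal (f x)) with hνdef
  have hν_ac : ν ≪ volume.restrict Ω := withDensity_absolutelyContinuous _ _
  have hf_ae_nonneg : ∀ᵐ x ∂(volume.restrict Ω), 0 ≤ f x :=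
    (ae_restrict_iff' hΩ_meas).2 (Filter.Eventually.of_forall hf_nonneg)
  have hconv : ∀ ρ : (EuclideanSpace ℝ (Fin N)) → ℝ, Measurable ρ → (∀ᵐ x ∂(volume.restrict Ω), 0 ≤ ρ x) →
      ∫ x in Ω, ρ x * f x = (∫⁻ x, ENNReal.ofReal (ρ x) ∂ν).toReal := by
    intro ρ hρm hρnn
    rw [integral_eq_lintegral_of_nonneg_ae ?_ ?_]
    · congr 1
      rw [hνdef,
        lintegral_withDensity_eq_lintegral_mul _ hf_meas.ennreal_ofReal hρm.ennreal_ofReal]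
      refine lintegral_congr_ae ?_
      filter_upwards [hρnn] with x hx
      simp only [Pi.mul_apply]
      rw [ENNReal.ofReal_mul hx, mul_comm]
    · filter_upwards [hρnn, hf_ae_nonneg] with x h1 h2
      exact mul_nonneg h1 h2
    · exact (hρm.mul hf_meas).aestronglyMeasurable
  have hlayer : ∀ ρ : (EuclideanSpace ℝ (Fin N)) → ℝ, Measurable ρ → (∀ᵐ x ∂(volume.restrict Ω), 0 ≤ ρ x) →
      ∫⁻ x, ENNReal.ofReal (ρ x) ∂ν = ∫⁻ t in Set.Ioi (0:ℝ), ν {a | t ≤ ρ a} := by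
    intro ρ hρm hρnn
    exact lintegral_eq_lintegral_meas_le ν (hρnn.filter_mono hν_ac.ae_le) hρm.aemeasurable
  have hν_apply : ∀ s : Set (EuclideanSpace ℝ (Fin N)), MeasurableSet s → ν s = ∫⁻ x in s ∩ Ω, ENNReal.ofReal (f x) := by
    intro s hs
    rw [hνdef, withDensity_apply _ hs, Measure.restrict_restrict hs]
  -- pointwise comparison of the layer measures
  have comp : ∀ t : ℝ, 0 < t →
      ν {a | t ≤ ρ₀ a} ≤ ν {a | t ≤ ∑ i, (Dhat i).indicator (fun _ => c i) a} := by
    intro t _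
    have hA_t : {a | t ≤ ρ₀ a} ∩ Ω = {x ∈ Ω | t ≤ ρ₀ x} := by
      ext x; simp only [Set.mem_inter_iff, Set.mem_setOf_eq]; exact and_comm
    have hB_t : {a : (EuclideanSpace ℝ (Fin N)) | t ≤ ∑ i, (Dhat i).indicator (fun _ => c i) a} ∩ Ω =
        {x ∈ Ω | t ≤ ∑ i, (Dhat i).indicator (fun _ => c i) x} := by
      ext x; simp only [Set.mem_inter_iff, Set.mem_setOf_eq]; exact and_comm
    rw [hν_apply _ (measurableSet_le measurable_const hρ₀_meas),
      hν_apply _ (measurableSet_le measurable_const hρ₁_meas), hA_t, hB_t]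
    by_cases hK : ∃ i : Fin m, t ≤ c i
    · obtain ⟨iw, hiw⟩ := hK
      set K := Finset.univ.filter (fun i : Fin m => t ≤ c i) with hKdef
      have hKne : K.Nonempty := ⟨iw, by simp [hKdef, hiw]⟩
      set j₀ := K.min' hKne with hj₀
      have hj₀K : t ≤ c j₀ := by
        have h := K.min'_mem hKne
        simp only [hKdef, Finset.mem_filter] at h
        exact h.2
      have hiff : ∀ i : Fin m, (t ≤ c i ↔ j₀ ≤ i) := by
        intro i
        constructor
        · intro h
          exact K.min'_le i (by simp only [hKdef, Finset.mem_filter]; exact ⟨Finset.mem_univ i, h⟩)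
        · intro h
          exact le_trans hj₀K (hc_mono.monotone h)
      have hBset : {x ∈ Ω | t ≤ ∑ i, (Dhat i).indicator (fun _ => c i) x} =
          {x ∈ Ω | τ j₀.val ≤ f x} := by
        rw [step_super c hDhat_disj hDhat_union t]
        have h1 : (⋃ i, if t ≤ c i then Dhat i else ∅) =
            ⋃ (i : Fin m) (_ : j₀.val ≤ i.val), Dhat i := by
          ext x
          simp only [Set.mem_iUnion]
          constructor
          · rintro ⟨i, hi⟩
            by_cases h : t ≤ c i
            · rw [if_pos h] at hi
              exact ⟨i, (hiff i).1 h, hi⟩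
            · rw [if_neg h] at hi
              exact absurd hi (Set.notMem_empty x)
          · rintro ⟨i, hji, hi⟩
            have ht : t ≤ c i := (hiff i).2 hji
            exact ⟨i, by rw [if_pos ht]; exact hi⟩
        rw [h1, hunion_tail j₀.val (le_of_lt j₀.isLt), hA_super j₀.val j₀.isLt]
      rw [hBset]
      have hAmeas : MeasurableSet {x ∈ Ω | t ≤ ρ₀ x} :=
        hΩ_meas.inter (measurableSet_le measurable_const hρ₀_meas)
      have hveq : volume {x ∈ Ω | t ≤ ρ₀ x} = volume {x ∈ Ω | τ j₀.val ≤ f x} := by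
        rw [hρ₀_mem t, ← hDhat_dist t, hBset]
      exact bathtub hΩ_meas hΩ_fin hf_meas hAmeas (fun x hx => hx.1)
        (hτ_nonneg j₀.val (by have := j₀.isLt; omega)) hveq
    · push_neg at hK
      have hvol0 : volume {x ∈ Ω | t ≤ ρ₀ x} = 0 := by
        rw [hρ₀_mem t, step_super_vol c S hD_meas hD_disj hD_union hD_vol t]
        exact Finset.sum_eq_zero fun i _ => if_neg (not_le.2 (hK i))
      rw [setLIntegral_measure_zero _ _ hvol0]
      exact zero_le
  have hρ₁_ae_nonneg : ∀ᵐ x ∂(volume.restrict Ω),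
      0 ≤ ∑ i, (Dhat i).indicator (fun _ => c i) x :=
    Filter.Eventually.of_forall hρ₁_nonneg
  have hmain : ∫⁻ x, ENNReal.ofReal (ρ₀ x) ∂ν ≤
      ∫⁻ x, ENNReal.ofReal (∑ i, (Dhat i).indicator (fun _ => c i) x) ∂ν := by
    have l₀ : ∫⁻ x, ENNReal.ofReal (ρ₀ x) ∂ν = ∫⁻ t in Set.Ioi (0:ℝ), ν {a | t ≤ ρ₀ a} :=
      hlayer ρ₀ hρ₀_meas hρ₀_ae_nonneg
    have l₁ : ∫⁻ x, ENNReal.ofReal (∑ i, (Dhat i).indicator (fun _ => c i) x) ∂ν =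
        ∫⁻ t in Set.Ioi (0:ℝ), ν {a | t ≤ ∑ i, (Dhat i).indicator (fun _ => c i) a} :=
      hlayer _ hρ₁_meas hρ₁_ae_nonneg
    rw [l₀, l₁]
    refine lintegral_mono_ae ?_
    filter_upwards [self_mem_ae_restrict measurableSet_Ioi] with t ht
    exact comp t ht
  -- finiteness of the right-hand side
  obtain ⟨cm, hcmval⟩ : ∃ cm : Fin m, cm.val = m - 1 := ⟨⟨m - 1, by omega⟩, rfl⟩
  have hρ₁_le : ∀ x : (EuclideanSpace ℝ (Fin N)), ∑ i, (Dhat i).indicator (fun _ => c i) x ≤ c cm := by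
    intro x
    by_cases hx : x ∈ ⋃ i, Dhat i
    · obtain ⟨j, hj⟩ := Set.mem_iUnion.1 hx
      rw [step_val c hDhat_disj hj]
      refine hc_mono.monotone ?_
      rw [Fin.le_def, hcmval]
      have := j.isLt
      omega
    · have hz : ∀ i : Fin m, (Dhat i).indicator (fun _ => c i) x = 0 := fun i =>
        Set.indicator_of_notMem (fun h => hx (Set.mem_iUnion.2 ⟨i, h⟩)) _
      rw [Finset.sum_congr rfl fun i _ => hz i, Finset.sum_const, smul_zero]
      exact (hc_pos cm).le
  have hν_fin : ν Set.univ ≠ ⊤ := by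
    rw [hν_apply Set.univ MeasurableSet.univ, Set.univ_inter]
    have h1 : ∫⁻ x in Ω, ENNReal.ofReal (f x) ≤ ∫⁻ x in Ω, (‖f x‖₊ : ℝ≥0∞) :=
      lintegral_mono fun x => Real.ofReal_le_enorm (f x)
    have h2 : ∫⁻ x in Ω, (‖f x‖₊ : ℝ≥0∞) < ⊤ := hf_int.2
    exact (lt_of_le_of_lt h1 h2).ne
  have hL₁_fin : ∫⁻ x, ENNReal.ofReal (∑ i, (Dhat i).indicator (fun _ => c i) x) ∂ν ≠ ⊤ := by
    have hb : ∫⁻ x, ENNReal.ofReal (∑ i, (Dhat i).indicator (fun _ => c i) x) ∂ν ≤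
        ENNReal.ofReal (c cm) * ν Set.univ := by
      calc ∫⁻ x, ENNReal.ofReal (∑ i, (Dhat i).indicator (fun _ => c i) x) ∂ν
          ≤ ∫⁻ _x, ENNReal.ofReal (c cm) ∂ν :=
            lintegral_mono fun x => ENNReal.ofReal_le_ofReal (hρ₁_le x)
        _ = ENNReal.ofReal (c cm) * ν Set.univ := by rw [lintegral_const]
    exact ne_top_of_le_ne_top (ENNReal.mul_ne_top ENNReal.ofReal_ne_top hν_fin) hb
  have e₀ : ∫ x in Ω, ρ₀ x * f x = (∫⁻ x, ENNReal.ofReal (ρ₀ x) ∂ν).toReal :=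
    hconv ρ₀ hρ₀_meas hρ₀_ae_nonneg
  have e₁ : ∫ x in Ω, (∑ i, (Dhat i).indicator (fun _ => c i) x) * f x =
      (∫⁻ x, ENNReal.ofReal (∑ i, (Dhat i).indicator (fun _ => c i) x) ∂ν).toReal :=
    hconv _ hρ₁_meas hρ₁_ae_nonneg
  rw [e₀, e₁]
  exact ENNReal.toReal_mono hL₁_fin hmain
end

section
/- Let ρ₀ ∈ P and let f ∈ L¹(Ω) be nonnegative with all level sets {x ∈ Ω : f(x) = c} of Lebesgue measure zero. Then there exists ρ₁ ∈ P such that ∫_Ω ρ₁ f dx ≤ ∫_Ω ρ₀ f dx, and moreover ρ₁ can be taken of the form c₁χ_{D̂₁} + ⋯ + c_m χ_{D̂_m} where D̂₁, …, D̂_m are pairwise disjoint measurable sets obtained from the super-level sets of f, with |D̂_i| = S_i and ⋃_{i=1}^m D̂_i = Ω. -/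
open MeasureTheory Set

variable {X : Type*} [MeasurableSpace X]

lemma sum_indicator_val {m : ℕ} (c : Fin m → ℝ) (E : Fin m → Set X)
    (hdisj : Pairwise (Function.onFun Disjoint E)) {x : X} {i₀ : Fin m} (hx : x ∈ E i₀) :
    ∑ i, (E i).indicator (fun _ => c i) x = c i₀ := by
  rw [Finset.sum_eq_single i₀]
  · simp [Set.indicator_of_mem hx]
  · intro j _ hj
    have hxj : x ∉ E j := fun hxj => Set.disjoint_left.mp (hdisj hj) hxj hx
    simp [Set.indicator_of_notMem hxj]
  · intro h; exact absurd (Finset.mem_univ i₀) h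

lemma step_level_set {m : ℕ} (c : Fin m → ℝ) (Ω : Set X) (E : Fin m → Set X)
    (hdisj : Pairwise (Function.onFun Disjoint E)) (hunion : ⋃ i, E i = Ω)
    (P : ℝ → Prop) [DecidablePred P] :
    {x ∈ Ω | P (∑ i, (E i).indicator (fun _ => c i) x)} =
      ⋃ i ∈ Finset.univ.filter (fun i => P (c i)), E i := by
  ext x
  simp only [mem_setOf_eq, mem_iUnion, Finset.mem_filter, Finset.mem_univ, true_and,
    exists_prop]
  constructor
  · rintro ⟨hxΩ, hP⟩
    rw [← hunion] at hxΩ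
    obtain ⟨i, hi⟩ := mem_iUnion.mp hxΩ
    exact ⟨i, by rwa [sum_indicator_val c E hdisj hi] at hP, hi⟩
  · rintro ⟨i, hPi, hxi⟩
    refine ⟨hunion ▸ mem_iUnion.mpr ⟨i, hxi⟩, ?_⟩
    rwa [sum_indicator_val c E hdisj hxi]

lemma step_level_measure (μ : Measure X) {m : ℕ} (c : Fin m → ℝ) (S : Fin m → ℝ)
    (Ω : Set X) (E : Fin m → Set X)
    (hmeas : ∀ i, MeasurableSet (E i))
    (hdisj : Pairwise (Function.onFun Disjoint E)) (hunion : ⋃ i, E i = Ω)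
    (hvol : ∀ i, μ (E i) = ENNReal.ofReal (S i))
    (P : ℝ → Prop) [DecidablePred P] :
    μ {x ∈ Ω | P (∑ i, (E i).indicator (fun _ => c i) x)} =
      ∑ i ∈ Finset.univ.filter (fun i => P (c i)), ENNReal.ofReal (S i) := by
  rw [step_level_set c Ω E hdisj hunion P,
    measure_biUnion_finset (hdisj.set_pairwise _) (fun i _ => hmeas i)]
  exact Finset.sum_congr rfl fun i _ => hvol i

lemma bathtub_s14 (μ : Measure X) (f : X → ℝ) (s : ℝ) (B E : Set X)
    (hB : ∀ x ∈ B, f x < s) (hE : ∀ x ∈ E, x ∉ B → s ≤ f x)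
    (hBm : MeasurableSet B) (hEm : MeasurableSet E)
    (hBfin : μ B ≠ ⊤) (hEfin : μ E ≠ ⊤) (heq : μ E = μ B) :
    ∫⁻ x in B, ENNReal.ofReal (f x) ∂μ ≤ ∫⁻ x in E, ENNReal.ofReal (f x) ∂μ := by
  have hBsplit : ∫⁻ x in B, ENNReal.ofReal (f x) ∂μ =
      ∫⁻ x in B ∩ E, ENNReal.ofReal (f x) ∂μ + ∫⁻ x in B \ E, ENNReal.ofReal (f x) ∂μ := by
    rw [← lintegral_union (hBm.diff hEm) (disjoint_sdiff_right.mono_left inter_subset_right),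
      inter_union_diff]
  have hEsplit : ∫⁻ x in E, ENNReal.ofReal (f x) ∂μ =
      ∫⁻ x in E ∩ B, ENNReal.ofReal (f x) ∂μ + ∫⁻ x in E \ B, ENNReal.ofReal (f x) ∂μ := by
    rw [← lintegral_union (hEm.diff hBm) (disjoint_sdiff_right.mono_left inter_subset_right),
      inter_union_diff]
  have hmeq : μ (B \ E) = μ (E \ B) := by
    have h1 : μ (B ∩ E) + μ (B \ E) = μ B := by
      rw [← measure_union (disjoint_sdiff_right.mono_left inter_subset_right) (hBm.diff hEm),
        inter_union_diff]
    have h2 : μ (B ∩ E) + μ (E \ B) = μ E := by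
      rw [Set.inter_comm, ← measure_union (disjoint_sdiff_right.mono_left inter_subset_right)
        (hEm.diff hBm), inter_union_diff]
    have hfin : μ (B ∩ E) ≠ ⊤ := fun h =>
      hBfin (top_le_iff.mp (h ▸ measure_mono inter_subset_left) ▸ rfl)
    have : μ (B ∩ E) + μ (B \ E) = μ (B ∩ E) + μ (E \ B) := by rw [h1, h2, heq]
    exact (ENNReal.add_right_inj hfin).mp this
  have h1 : ∫⁻ x in B \ E, ENNReal.ofReal (f x) ∂μ ≤ ENNReal.ofReal s * μ (B \ E) := by
    calc ∫⁻ x in B \ E, ENNReal.ofReal (f x) ∂μ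
        ≤ ∫⁻ _x in B \ E, ENNReal.ofReal s ∂μ :=
          setLIntegral_mono' (hBm.diff hEm)
            (fun x hx => ENNReal.ofReal_le_ofReal (hB x hx.1).le)
      _ = ENNReal.ofReal s * μ (B \ E) := setLIntegral_const _ _
  have h2 : ENNReal.ofReal s * μ (E \ B) ≤ ∫⁻ x in E \ B, ENNReal.ofReal (f x) ∂μ := by
    calc ENNReal.ofReal s * μ (E \ B) = ∫⁻ _x in E \ B, ENNReal.ofReal s ∂μ :=
          (setLIntegral_const _ _).symm
      _ ≤ ∫⁻ x in E \ B, ENNReal.ofReal (f x) ∂μ :=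
          setLIntegral_mono' (hEm.diff hBm)
            (fun x hx => ENNReal.ofReal_le_ofReal (hE x hx.1 hx.2))
  calc ∫⁻ x in B, ENNReal.ofReal (f x) ∂μ
      = ∫⁻ x in B ∩ E, ENNReal.ofReal (f x) ∂μ + ∫⁻ x in B \ E, ENNReal.ofReal (f x) ∂μ :=
        hBsplit
    _ ≤ ∫⁻ x in B ∩ E, ENNReal.ofReal (f x) ∂μ + ENNReal.ofReal s * μ (B \ E) := by gcongr
    _ = ∫⁻ x in E ∩ B, ENNReal.ofReal (f x) ∂μ + ENNReal.ofReal s * μ (E \ B) := by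
        rw [Set.inter_comm, hmeq]
    _ ≤ ∫⁻ x in E ∩ B, ENNReal.ofReal (f x) ∂μ + ∫⁻ x in E \ B, ENNReal.ofReal (f x) ∂μ := by
        gcongr
    _ = ∫⁻ x in E, ENNReal.ofReal (f x) ∂μ := hEsplit.symm


/-- For any `ρ₀` in the rearrangement class `P` generated by a step
function, and any nonnegative `f ∈ L¹(Ω)` whose level sets are null, there is
`ρ₁ ∈ P` with `∫_Ω ρ₁ f ≤ ∫_Ω ρ₀ f`; moreover `ρ₁` can be taken to be a step function
`∑ i, c i • χ_{D̂ i}` on a measurable partition `D̂` of `Ω` with `|D̂ i| = S i`, built from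
the super-level sets of `f` (so that `f` is larger on `D̂ i` than on `D̂ j` for `i < j`). -/
theorem stmt14 {N m : ℕ}
    (Ω : Set (EuclideanSpace ℝ (Fin N)))
    (hΩ_meas : MeasurableSet Ω) (hΩ_bd : Bornology.IsBounded Ω)
    (c : Fin m → ℝ) (hc_pos : ∀ i, 0 < c i) (hc_mono : StrictMono c)
    (S : Fin m → ℝ) (hS_pos : ∀ i, 0 < S i)
    (D : Fin m → Set (EuclideanSpace ℝ (Fin N)))
    (hD_meas : ∀ i, MeasurableSet (D i))
    (hD_disj : Pairwise (Function.onFun Disjoint D))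
    (hD_union : (⋃ i, D i) = Ω)
    (hD_vol : ∀ i, volume (D i) = ENNReal.ofReal (S i))
    (ρ₀ : EuclideanSpace ℝ (Fin N) → ℝ) (hρ₀_meas : Measurable ρ₀)
    (hρ₀_mem : ∀ r : ℝ, volume {x ∈ Ω | r ≤ ρ₀ x} =
      volume {x ∈ Ω | r ≤ ∑ i, (D i).indicator (fun _ => c i) x})
    (f : EuclideanSpace ℝ (Fin N) → ℝ) (hf_meas : Measurable f)
    (hf_int : IntegrableOn f Ω) (hf_nonneg : ∀ x ∈ Ω, 0 ≤ f x)
    (hf_level : ∀ a : ℝ, volume {x ∈ Ω | f x = a} = 0) :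
    ∃ Dhat : Fin m → Set (EuclideanSpace ℝ (Fin N)),
      (∀ i, MeasurableSet (Dhat i)) ∧
      Pairwise (Function.onFun Disjoint Dhat) ∧
      (∀ i, volume (Dhat i) = ENNReal.ofReal (S i)) ∧
      (⋃ i, Dhat i) = Ω ∧
      (∀ i j : Fin m, i < j → ∀ y ∈ Dhat i, ∀ x ∈ Dhat j, f x ≤ f y) ∧
      (∀ r : ℝ,
        volume {x ∈ Ω | r ≤ ∑ i, (Dhat i).indicator (fun _ => c i) x} =
          volume {x ∈ Ω | r ≤ ∑ i, (D i).indicator (fun _ => c i) x}) ∧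
      (∫ x in Ω, (∑ i, (Dhat i).indicator (fun _ => c i) x) * f x) ≤
        ∫ x in Ω, ρ₀ x * f x := by
  classical
  rcases Nat.eq_zero_or_pos m with hm | hm
  · subst hm
    have hΩe : Ω = ∅ := by rw [← hD_union]; simp
    refine ⟨D, hD_meas, hD_disj, hD_vol, hD_union, fun i => i.elim0, fun r => rfl, ?_⟩
    simp [hΩe]
  -- main case
  have hΩfin : volume Ω < ⊤ := hΩ_bd.measure_lt_top
  -- basic measurability and finiteness for superlevel sets of f
  have hmeasA : ∀ t : ℝ, MeasurableSet (Ω ∩ {x | t ≤ f x}) := fun t =>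
    hΩ_meas.inter (measurableSet_le measurable_const hf_meas)
  have hfinsub : ∀ s : Set (EuclideanSpace ℝ (Fin N)), s ⊆ Ω → volume s ≠ ⊤ := fun s hs =>
    ((measure_mono hs).trans_lt hΩfin).ne
  set φ : ℝ → ℝ := fun t => (volume (Ω ∩ {x | t ≤ f x})).toReal with hφdef
  have hφ_anti : Antitone φ := by
    intro t t' htt'
    exact ENNReal.toReal_mono (hfinsub _ inter_subset_left)
      (measure_mono (inter_subset_inter_right _ (fun x hx => le_trans htt' hx)))
  have hsplit : ∀ u v : ℝ, u ≤ v →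
      φ u = φ v + (volume (Ω ∩ {x | u ≤ f x ∧ f x < v})).toReal := by
    intro u v huv
    have hset : Ω ∩ {x | u ≤ f x} =
        (Ω ∩ {x | v ≤ f x}) ∪ (Ω ∩ {x | u ≤ f x ∧ f x < v}) := by
      ext x
      simp only [mem_inter_iff, mem_setOf_eq, mem_union]
      constructor
      · rintro ⟨hxΩ, hxu⟩
        rcases le_or_gt v (f x) with h | h
        · exact Or.inl ⟨hxΩ, h⟩
        · exact Or.inr ⟨hxΩ, hxu, h⟩
      · rintro (⟨hxΩ, hxv⟩ | ⟨hxΩ, hxu, _⟩)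
        · exact ⟨hxΩ, le_trans huv hxv⟩
        · exact ⟨hxΩ, hxu⟩
    have hdisj : Disjoint (Ω ∩ {x | v ≤ f x}) (Ω ∩ {x | u ≤ f x ∧ f x < v}) := by
      rw [Set.disjoint_left]
      rintro x ⟨_, hxv⟩ ⟨_, _, hlt⟩
      exact absurd hxv (not_le.mpr hlt)
    have hmeas2 : MeasurableSet (Ω ∩ {x | u ≤ f x ∧ f x < v}) := by
      have : {x | u ≤ f x ∧ f x < v} = {x | u ≤ f x} ∩ {x | f x < v} := rfl
      rw [this]
      exact hΩ_meas.inter ((measurableSet_le measurable_const hf_meas).inter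
        (measurableSet_lt hf_meas measurable_const))
    rw [hφdef]
    simp only
    rw [hset, measure_union hdisj hmeas2,
      ENNReal.toReal_add (hfinsub _ inter_subset_left) (hfinsub _ inter_subset_left)]
  have hφ_cont : Continuous φ := by
    rw [continuous_iff_continuousAt]
    intro a
    rw [Metric.continuousAt_iff]
    intro ε hε
    set H : ℕ → Set (EuclideanSpace ℝ (Fin N)) := fun n =>
      Ω ∩ {x | a - 1 / (n + 1) ≤ f x ∧ f x < a + 1 / (n + 1)} with hHdef
    have hHmeas : ∀ n, MeasurableSet (H n) := by
      intro n
      exact hΩ_meas.inter ((measurableSet_le measurable_const hf_meas).inter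
        (measurableSet_lt hf_meas measurable_const))
    have hHanti : Antitone H := by
      intro n n' hnn'
      have hd : (1 : ℝ) / (n' + 1) ≤ 1 / (n + 1) := by
        apply one_div_le_one_div_of_le
        · positivity
        · have : (n : ℝ) ≤ n' := Nat.cast_le.mpr hnn'
          linarith
      rintro x ⟨hxΩ, h1, h2⟩
      exact ⟨hxΩ, le_trans (by linarith) h1, lt_of_lt_of_le h2 (by linarith)⟩
    have hHinter : volume (⋂ n, H n) = 0 := by
      refine measure_mono_null ?_ (hf_level a)
      intro x hx
      simp only [mem_iInter] at hx
      obtain ⟨hxΩ, _, _⟩ := hx 0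
      refine ⟨hxΩ, ?_⟩
      have hge : a ≤ f x := by
        by_contra hlt
        push_neg at hlt
        obtain ⟨n, hn⟩ := exists_nat_one_div_lt (sub_pos.mpr hlt)
        have := (hx n).2.1
        have : (1:ℝ)/(n+1) ≤ a - f x := by linarith [(hx n).2.1]
        linarith
      have hle : f x ≤ a := by
        by_contra hlt
        push_neg at hlt
        obtain ⟨n, hn⟩ := exists_nat_one_div_lt (sub_pos.mpr hlt)
        have := (hx n).2.2
        linarith
      exact le_antisymm hle hge
    have htd : Filter.Tendsto (fun n => volume (H n)) Filter.atTop (nhds 0) := by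
      have := tendsto_measure_iInter_atTop (fun n => (hHmeas n).nullMeasurableSet) hHanti
        ⟨0, hfinsub _ inter_subset_left⟩
      rwa [hHinter] at this
    obtain ⟨n, hn⟩ : ∃ n, volume (H n) < ENNReal.ofReal ε := by
      have := htd.eventually_lt_const (ENNReal.ofReal_pos.mpr hε)
      exact this.exists
    refine ⟨1 / (n + 1), by positivity, ?_⟩
    intro t ht
    rw [Real.dist_eq] at ht
    have hkey : ∀ u v : ℝ, u ≤ v → a - 1/(n+1) ≤ u → v ≤ a + 1/(n+1) →
        |φ u - φ v| < ε := by
      intro u v huv hu hv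
      rw [hsplit u v huv]
      have hsub : Ω ∩ {x | u ≤ f x ∧ f x < v} ⊆ H n := by
        rintro x ⟨hxΩ, h1, h2⟩
        exact ⟨hxΩ, le_trans hu h1, lt_of_lt_of_le h2 hv⟩
      have hvol : volume (Ω ∩ {x | u ≤ f x ∧ f x < v}) < ENNReal.ofReal ε :=
        lt_of_le_of_lt (measure_mono hsub) hn
      have htr : (volume (Ω ∩ {x | u ≤ f x ∧ f x < v})).toReal < ε := by
        rw [← ENNReal.lt_ofReal_iff_toReal_lt (hfinsub _ inter_subset_left)]
        exact hvol
      rw [abs_of_nonneg (by simp [ENNReal.toReal_nonneg])]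
      · simpa using htr
    rw [Real.dist_eq]
    have hδ : |t - a| < 1/(n+1) := ht
    have hpos : (0:ℝ) < 1/(n+1) := by positivity
    have hab := abs_lt.mp hδ
    rcases le_total t a with h | h
    · exact hkey t a h (by linarith) (by linarith)
    · rw [abs_sub_comm]
      exact hkey a t h (by linarith) (by linarith)
  -- φ tends to 0 at infinity along ℕ
  have hφ_top : Filter.Tendsto (fun n : ℕ => φ n) Filter.atTop (nhds 0) := by
    have hinter : (⋂ n : ℕ, Ω ∩ {x | (n : ℝ) ≤ f x}) = ∅ := by
      ext x
      simp only [mem_iInter, mem_inter_iff, mem_setOf_eq, mem_empty_iff_false, iff_false,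
        not_forall]
      obtain ⟨n, hn⟩ := exists_nat_gt (f x)
      exact ⟨n, fun h => absurd h.2 (not_le.mpr hn)⟩
    have hanti : Antitone (fun n : ℕ => Ω ∩ {x | (n : ℝ) ≤ f x}) := by
      intro n n' hnn'
      rintro x ⟨h1, h2⟩
      refine ⟨h1, ?_⟩
      have h2' : ((n' : ℕ) : ℝ) ≤ f x := h2
      have hcast : ((n : ℕ) : ℝ) ≤ ((n' : ℕ) : ℝ) := Nat.cast_le.mpr hnn'
      exact le_trans hcast h2'
    have htd := tendsto_measure_iInter_atTop
      (s := fun n : ℕ => Ω ∩ {x | (n : ℝ) ≤ f x})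
      (fun n => (hmeasA (n : ℝ)).nullMeasurableSet) hanti ⟨0, hfinsub _ inter_subset_left⟩
    rw [hinter, measure_empty] at htd
    have := (ENNReal.tendsto_toReal (by simp : (0:ENNReal) ≠ ⊤)).comp htd
    exact this
  -- the cumulative sums W
  set S' : ℕ → ℝ := fun i => if h : i < m then S ⟨i, h⟩ else 0 with hS'def
  have hS'_nonneg : ∀ i, 0 ≤ S' i := by
    intro i
    simp only [hS'def]
    split
    · exact (hS_pos _).le
    · exact le_rfl
  set W : ℕ → ℝ := fun k => ∑ i ∈ Finset.range k, S' i with hWdef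
  have hW_succ : ∀ k, W (k + 1) = W k + S' k := fun k => Finset.sum_range_succ _ _
  have hW_mono : Monotone W := by
    intro k k' hkk'
    exact Finset.sum_le_sum_of_subset_of_nonneg (Finset.range_subset_range.mpr hkk')
      (fun i _ _ => hS'_nonneg i)
  have hW_nonneg : ∀ k, 0 ≤ W k := fun k => Finset.sum_nonneg fun i _ => hS'_nonneg i
  have hW_strict : ∀ k, k < m → W k < W (k + 1) := by
    intro k hk
    rw [hW_succ]
    have : 0 < S' k := by simp only [hS'def, hk, dif_pos]; exact hS_pos _
    linarith
  have hvolΩsum : volume Ω = ∑ i : Fin m, ENNReal.ofReal (S i) := by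
    rw [← hD_union, measure_iUnion hD_disj hD_meas, tsum_fintype]
    exact Finset.sum_congr rfl fun i _ => hD_vol i
  have hWm : W m = (volume Ω).toReal := by
    rw [hvolΩsum, hWdef]
    simp only
    rw [← Fin.sum_univ_eq_sum_range S' m]
    have : ∀ i : Fin m, S' (i : ℕ) = S i := by
      intro i
      rw [hS'def]
      simp [i.isLt]
    rw [Finset.sum_congr rfl fun i _ => this i]
    rw [← ENNReal.ofReal_sum_of_nonneg (fun i _ => (hS_pos i).le)]
    rw [ENNReal.toReal_ofReal (Finset.sum_nonneg fun i _ => (hS_pos i).le)]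
  have hφ0 : φ 0 = (volume Ω).toReal := by
    have hset : Ω ∩ {x | (0:ℝ) ≤ f x} = Ω := inter_eq_left.mpr (fun x hx => hf_nonneg x hx)
    simp only [hφdef]
    rw [hset]
  -- choose thresholds s
  have hsex : ∀ k : ℕ, ∃ t : ℝ, (0 < k → k < m → φ t = W k) := by
    intro k
    by_cases h : 0 < k ∧ k < m
    · obtain ⟨hk0, hkm⟩ := h
      have hWpos : 0 < W k := by
        calc (0:ℝ) = W 0 := by simp [hWdef]
          _ < W 1 := hW_strict 0 hm
          _ ≤ W k := hW_mono hk0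
      have hWle : W k ≤ (volume Ω).toReal := by
        rw [← hWm]; exact hW_mono hkm.le
      obtain ⟨n, hn⟩ : ∃ n : ℕ, φ n < W k := (hφ_top.eventually_lt_const hWpos).exists
      have hIVT := intermediate_value_Icc' (by positivity : (0:ℝ) ≤ n)
        hφ_cont.continuousOn
      have hmem : W k ∈ Icc (φ n) (φ 0) := ⟨hn.le, by rw [hφ0]; exact hWle⟩
      obtain ⟨t, _, ht⟩ := hIVT hmem
      exact ⟨t, fun _ _ => ht⟩
    · exact ⟨0, fun h1 h2 => absurd ⟨h1, h2⟩ h⟩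
  choose s hs using hsex
  have hs_anti : ∀ k, 0 < k → k + 1 < m → s (k + 1) ≤ s k := by
    intro k hk hk1
    by_contra hlt
    push_neg at hlt
    have h1 : φ (s (k+1)) ≤ φ (s k) := hφ_anti hlt.le
    rw [hs k hk (by omega), hs (k+1) (by omega) hk1] at h1
    exact absurd h1 (not_le.mpr (hW_strict k (by omega)))
  -- the sets A
  set A : ℕ → Set (EuclideanSpace ℝ (Fin N)) := fun k =>
    if k = 0 then ∅ else if k < m then Ω ∩ {x | s k ≤ f x} else Ω with hAdef
  have hA0 : A 0 = ∅ := by rw [hAdef]; simp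
  have hAtop : ∀ k, m ≤ k → A k = Ω := by
    intro k hk
    rw [hAdef]
    simp only
    rw [if_neg (by omega), if_neg (by omega)]
  have hAin : ∀ k, 0 < k → k < m → A k = Ω ∩ {x | s k ≤ f x} := by
    intro k hk0 hkm
    rw [hAdef]
    simp only
    rw [if_neg (by omega), if_pos hkm]
  have hAsub : ∀ k, A k ⊆ Ω := by
    intro k
    rw [hAdef]
    simp only
    split
    · exact empty_subset _
    · split
      · exact inter_subset_left
      · exact subset_rfl
  have hAmeas : ∀ k, MeasurableSet (A k) := by
    intro k
    rw [hAdef]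
    simp only
    split
    · exact MeasurableSet.empty
    · split
      · exact hmeasA _
      · exact hΩ_meas
  have hAvol : ∀ k, k ≤ m → volume (A k) = ENNReal.ofReal (W k) := by
    intro k hk
    rcases Nat.eq_zero_or_pos k with h0 | h0
    · subst h0
      rw [hA0]
      simp [hWdef]
    rcases eq_or_lt_of_le hk with heq | hlt
    · rw [heq, hAtop m le_rfl, ← ENNReal.ofReal_toReal hΩfin.ne, ← hWm]
    · rw [hAin k h0 hlt]
      have hφs := hs k h0 hlt
      rw [hφdef] at hφs
      simp only at hφs
      rw [← hφs, ENNReal.ofReal_toReal (hfinsub _ inter_subset_left)]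
  have hAmono : Monotone A := by
    apply monotone_nat_of_le_succ
    intro k
    rcases Nat.eq_zero_or_pos k with h0 | h0
    · subst h0; rw [hA0]; exact empty_subset _
    by_cases hk1 : k + 1 < m
    · rw [hAin k h0 (by omega), hAin (k+1) (by omega) hk1]
      exact inter_subset_inter_right _ (fun x hx => le_trans (hs_anti k h0 hk1) hx)
    · rw [hAtop (k+1) (by omega)]
      exact hAsub k
  -- the partition Dhat
  set Dhat : Fin m → Set (EuclideanSpace ℝ (Fin N)) := fun i =>
    A ((i : ℕ) + 1) \ A (i : ℕ) with hDhatdef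
  have hDhat_meas : ∀ i, MeasurableSet (Dhat i) := fun i =>
    (hAmeas _).diff (hAmeas _)
  have hDhat_vol : ∀ i, volume (Dhat i) = ENNReal.ofReal (S i) := by
    intro i
    rw [hDhatdef]
    simp only
    rw [measure_diff (hAmono (Nat.le_succ _)) (hAmeas _).nullMeasurableSet
      (hfinsub _ (hAsub _)), hAvol _ i.isLt.le, hAvol _ (Nat.succ_le_of_lt i.isLt),
      ← ENNReal.ofReal_sub _ (hW_nonneg _)]
    congr 1
    rw [hW_succ]
    have : S' (i : ℕ) = S i := by rw [hS'def]; simp [i.isLt]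
    linarith [this]
  have hDhat_lt_disj : ∀ i j : Fin m, i < j → Disjoint (Dhat i) (Dhat j) := by
    intro i j hij
    rw [Set.disjoint_left]
    intro x hxi hxj
    have h1 : x ∈ A ((i:ℕ)+1) := hxi.1
    have h2 : x ∈ A (j:ℕ) := hAmono (by omega : (i:ℕ)+1 ≤ (j:ℕ)) h1
    exact hxj.2 h2
  have hDhat_disj : Pairwise (Function.onFun Disjoint Dhat) := by
    intro i j hij
    rcases hij.lt_or_gt with h | h
    · exact hDhat_lt_disj i j h
    · exact (hDhat_lt_disj j i h).symm
  have hUnionTail : ∀ l : ℕ,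
      (⋃ i ∈ Finset.univ.filter (fun i : Fin m => l ≤ (i:ℕ)), Dhat i) = Ω \ A l := by
    intro l
    ext x
    simp only [mem_iUnion, Finset.mem_filter, Finset.mem_univ, true_and, exists_prop,
      mem_diff]
    constructor
    · rintro ⟨i, hli, hxi⟩
      refine ⟨hAsub _ hxi.1, fun hxl => hxi.2 (hAmono hli hxl)⟩
    · rintro ⟨hxΩ, hxl⟩
      have hxm : x ∈ A m := by rw [hAtop m le_rfl]; exact hxΩ
      have hex : ∃ k, x ∈ A k := ⟨m, hxm⟩
      set k₀ := Nat.find hex with hk₀def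
      have hk₀spec : x ∈ A k₀ := Nat.find_spec hex
      have hk₀le : k₀ ≤ m := Nat.find_min' hex hxm
      have hk₀pos : l < k₀ := by
        by_contra hle
        push_neg at hle
        exact hxl (hAmono hle hk₀spec)
      have hk₀0 : k₀ ≠ 0 := by
        intro h
        rw [h, hA0] at hk₀spec
        exact hk₀spec
      have hxnot : x ∉ A (k₀ - 1) := Nat.find_min hex (by omega)
      refine ⟨⟨k₀ - 1, by omega⟩, by simp; omega, ?_, hxnot⟩
      have hplus : k₀ - 1 + 1 = k₀ := by omega
      show x ∈ A (k₀ - 1 + 1)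
      rw [hplus]
      exact hk₀spec
  have hDhat_union : (⋃ i, Dhat i) = Ω := by
    have h := hUnionTail 0
    rw [hA0] at h
    simp only [Nat.zero_le, Finset.filter_true, diff_empty] at h
    rw [← h]
    ext x
    simp
  have hDhat_order : ∀ i j : Fin m, i < j → ∀ y ∈ Dhat i, ∀ x ∈ Dhat j, f x ≤ f y := by
    intro i j hij y hy x hx
    have hi1m : (i:ℕ) + 1 < m := by omega
    have hAi1 : A ((i:ℕ)+1) = Ω ∩ {x | s ((i:ℕ)+1) ≤ f x} := hAin _ (by omega) hi1m
    have hyge : s ((i:ℕ)+1) ≤ f y := by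
      have := hy.1
      rw [hAi1] at this
      exact this.2
    have hxΩ : x ∈ Ω := hAsub _ hx.1
    have hxnot : x ∉ A ((i:ℕ)+1) := fun h => hx.2 (hAmono (by omega : (i:ℕ)+1 ≤ (j:ℕ)) h)
    rw [hAi1] at hxnot
    have : ¬ s ((i:ℕ)+1) ≤ f x := fun h => hxnot ⟨hxΩ, h⟩
    linarith [hyge, not_le.mp this]
  -- distribution property
  have hstepDist : ∀ (P : ℝ → Prop) [DecidablePred P],
      volume {x ∈ Ω | P (∑ i, (D i).indicator (fun _ => c i) x)} =
        ∑ i ∈ Finset.univ.filter (fun i => P (c i)), ENNReal.ofReal (S i) := fun P _ =>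
    step_level_measure volume c S Ω D hD_meas hD_disj hD_union hD_vol P
  have hdist : ∀ r : ℝ,
      volume {x ∈ Ω | r ≤ ∑ i, (Dhat i).indicator (fun _ => c i) x} =
        volume {x ∈ Ω | r ≤ ∑ i, (D i).indicator (fun _ => c i) x} := by
    intro r
    rw [step_level_measure volume c S Ω Dhat hDhat_meas hDhat_disj hDhat_union hDhat_vol
      (fun v => r ≤ v), hstepDist (fun v => r ≤ v)]
  refine ⟨Dhat, hDhat_meas, hDhat_disj, hDhat_vol, hDhat_union, hDhat_order, hdist, ?_⟩
  -- the step function g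
  set g : EuclideanSpace ℝ (Fin N) → ℝ := fun x => ∑ i, (Dhat i).indicator (fun _ => c i) x
    with hgdef
  have hg_meas : Measurable g := by
    apply Finset.measurable_sum
    intro i _
    exact Measurable.indicator measurable_const (hDhat_meas i)
  have hg_nonneg : ∀ x, 0 ≤ g x := fun x =>
    Finset.sum_nonneg fun i _ => Set.indicator_apply_nonneg (fun _ => (hc_pos i).le)
  set i0 : Fin m := ⟨0, hm⟩ with hi0
  have hc0_le : ∀ i, c i0 ≤ c i := fun i => hc_mono.monotone (by
    rw [Fin.le_def]; exact Nat.zero_le _)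
  set ilast : Fin m := ⟨m - 1, by omega⟩ with hilast
  have hc_le_last : ∀ i, c i ≤ c ilast := fun i => hc_mono.monotone (by
    rw [Fin.le_def]; have := i.isLt; simp only [hilast]; omega)
  have hsep : ∀ (p : (EuclideanSpace ℝ (Fin N)) → Prop), {x ∈ Ω | p x} = {x | p x} ∩ Ω := by
    intro p; ext x; simp only [mem_setOf_eq, mem_inter_iff]; tauto
  -- lower bound for ρ₀ a.e.
  have hfull : volume {x ∈ Ω | c i0 ≤ ρ₀ x} = volume Ω := by
    rw [hρ₀_mem, hstepDist (fun v => c i0 ≤ v)]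
    have hft : Finset.univ.filter (fun i : Fin m => c i0 ≤ c i) = Finset.univ :=
      Finset.filter_true_of_mem (fun i _ => hc0_le i)
    rw [hft, hvolΩsum]
  have hρ₀_lb : ∀ᵐ x ∂(volume.restrict Ω), c i0 ≤ ρ₀ x := by
    rw [ae_iff]
    have hmS : MeasurableSet {x | c i0 ≤ ρ₀ x} := measurableSet_le measurable_const hρ₀_meas
    have h1 : (volume.restrict Ω) {x | c i0 ≤ ρ₀ x} = volume Ω := by
      rw [Measure.restrict_apply hmS, ← hsep _, hfull]
    have h2 : {x | ¬ c i0 ≤ ρ₀ x} = {x | c i0 ≤ ρ₀ x}ᶜ := by ext x; simp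
    rw [h2, measure_compl hmS (by rw [h1]; exact hΩfin.ne), h1, Measure.restrict_apply_univ]
    exact tsub_self _
  -- upper bound for ρ₀ a.e.
  have hzero : (volume.restrict Ω) {x | c ilast + 1 ≤ ρ₀ x} = 0 := by
    have hmS : MeasurableSet {x | c ilast + 1 ≤ ρ₀ x} :=
      measurableSet_le measurable_const hρ₀_meas
    rw [Measure.restrict_apply hmS, ← hsep _, hρ₀_mem, hstepDist (fun v => c ilast + 1 ≤ v)]
    have hft : Finset.univ.filter (fun i : Fin m => c ilast + 1 ≤ c i) = ∅ := by
      apply Finset.filter_false_of_mem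
      intro i _
      exact not_le.mpr (by linarith [hc_le_last i])
    rw [hft]
    simp
  have hρ₀_ub : ∀ᵐ x ∂(volume.restrict Ω), ρ₀ x < c ilast + 1 := by
    rw [ae_iff]
    have h2 : {x | ¬ ρ₀ x < c ilast + 1} = {x | c ilast + 1 ≤ ρ₀ x} := by ext x; simp
    rw [h2]
    exact hzero
  -- integrability of ρ₀ * f
  have hInt : IntegrableOn (fun x => ρ₀ x * f x) Ω := by
    apply Integrable.mono (hf_int.const_mul (c ilast + 1))
      ((hρ₀_meas.mul hf_meas).aestronglyMeasurable)
    filter_upwards [hρ₀_lb, hρ₀_ub] with x h1 h2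
    rw [Real.norm_eq_abs, Real.norm_eq_abs, Pi.mul_apply, abs_mul, abs_mul]
    apply mul_le_mul_of_nonneg_right _ (abs_nonneg _)
    rw [abs_of_nonneg (le_trans (hc_pos i0).le h1), abs_of_pos (by linarith [hc_pos ilast])]
    exact h2.le
  -- the weighted measure ν
  have hftil_meas : Measurable (fun x => ENNReal.ofReal (f x)) := hf_meas.ennreal_ofReal
  set ν : Measure (EuclideanSpace ℝ (Fin N)) :=
    (volume.restrict Ω).withDensity (fun x => ENNReal.ofReal (f x)) with hν
  have hf_ae0 : ∀ᵐ x ∂(volume.restrict Ω), 0 ≤ f x :=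
    (ae_restrict_iff' hΩ_meas).2 (Filter.Eventually.of_forall hf_nonneg)
  -- level-set measure for ρ₀ (strict)
  have hρ₀_lt : ∀ t : ℝ, volume ({x | t < ρ₀ x} ∩ Ω) =
      ∑ i ∈ Finset.univ.filter (fun i => t < c i), ENNReal.ofReal (S i) := by
    intro t
    have huni : {x | t < ρ₀ x} ∩ Ω = ⋃ n : ℕ, {x ∈ Ω | t + 1/(n+1) ≤ ρ₀ x} := by
      ext x
      simp only [mem_inter_iff, mem_setOf_eq, mem_iUnion]
      constructor
      · rintro ⟨hlt, hxΩ⟩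
        obtain ⟨n, hn⟩ := exists_nat_one_div_lt (sub_pos.mpr hlt)
        exact ⟨n, hxΩ, by linarith⟩
      · rintro ⟨n, hxΩ, hle⟩
        have hpos : (0:ℝ) < 1/(n+1) := by positivity
        exact ⟨by linarith, hxΩ⟩
    have hmono : Monotone (fun n : ℕ => {x ∈ Ω | t + 1/(n+1) ≤ ρ₀ x}) := by
      intro n n' hnn' x hx
      obtain ⟨hxΩ, hle⟩ := hx
      have hd : (1 : ℝ)/(n'+1) ≤ 1/(n+1) := by
        apply one_div_le_one_div_of_le
        · positivity
        · have : (n:ℝ) ≤ n' := Nat.cast_le.mpr hnn'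
          linarith
      exact ⟨hxΩ, by linarith⟩
    rw [huni, hmono.measure_iUnion]
    have hval : ∀ n : ℕ, volume {x ∈ Ω | t + 1/(n+1) ≤ ρ₀ x} =
        ∑ i ∈ Finset.univ.filter (fun i => t + 1/(n+1) ≤ c i), ENNReal.ofReal (S i) := by
      intro n
      rw [hρ₀_mem, hstepDist (fun v => t + 1/(n+1) ≤ v)]
    apply le_antisymm
    · apply iSup_le
      intro n
      rw [hval n]
      apply Finset.sum_le_sum_of_subset
      intro i hi
      simp only [Finset.mem_filter, Finset.mem_univ, true_and] at hi ⊢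
      have hpos : (0:ℝ) < 1/(n+1) := by positivity
      linarith
    · by_cases hne : (Finset.univ.filter (fun i : Fin m => t < c i)).Nonempty
      · obtain ⟨j₀, hj₀mem, hminj⟩ := Finset.exists_min_image _ (fun i => c i - t) hne
        simp only [Finset.mem_filter, Finset.mem_univ, true_and] at hj₀mem
        obtain ⟨n, hn⟩ := exists_nat_one_div_lt (sub_pos.mpr hj₀mem)
        refine le_trans ?_ (le_iSup _ n)
        rw [hval n]
        apply Finset.sum_le_sum_of_subset
        intro i hi
        simp only [Finset.mem_filter, Finset.mem_univ, true_and] at hi ⊢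
        have := hminj i (by simp only [Finset.mem_filter, Finset.mem_univ, true_and]; exact hi)
        linarith
      · rw [Finset.not_nonempty_iff_eq_empty.mp hne]
        simp
  -- level-set measure for g (strict)
  have hg_lt : ∀ t : ℝ, volume ({x | t < g x} ∩ Ω) =
      ∑ i ∈ Finset.univ.filter (fun i => t < c i), ENNReal.ofReal (S i) := by
    intro t
    rw [← hsep _]
    simp only [hgdef]
    exact step_level_measure volume c S Ω Dhat hDhat_meas hDhat_disj hDhat_union hDhat_vol
      (fun v => t < v)
  have hBset : ∀ t : ℝ, {x ∈ Ω | t < g x} =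
      ⋃ i ∈ Finset.univ.filter (fun i : Fin m => t < c i), Dhat i := by
    intro t
    simp only [hgdef]
    exact step_level_set c Ω Dhat hDhat_disj hDhat_union (fun v => t < v)
  -- key comparison
  have hkeyν : ∀ t : ℝ, ν {x | t < g x} ≤ ν {x | t < ρ₀ x} := by
    intro t
    have hmg : MeasurableSet {x | t < g x} := measurableSet_lt measurable_const hg_meas
    have hmρ : MeasurableSet {x | t < ρ₀ x} := measurableSet_lt measurable_const hρ₀_meas
    rw [hν, withDensity_apply _ hmg, withDensity_apply _ hmρ,
      Measure.restrict_restrict hmg, Measure.restrict_restrict hmρ]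
    have hBtalt : {x | t < g x} ∩ Ω = {x ∈ Ω | t < g x} := (hsep _).symm
    have hvolEq : volume ({x | t < ρ₀ x} ∩ Ω) = volume ({x | t < g x} ∩ Ω) := by
      rw [hρ₀_lt t, hg_lt t]
    by_cases hne : (Finset.univ.filter (fun i : Fin m => t < c i)).Nonempty
    · set k₀ := (Finset.univ.filter (fun i : Fin m => t < c i)).min' hne with hk₀
      have hfilter_eq : Finset.univ.filter (fun i : Fin m => t < c i) =
          Finset.univ.filter (fun i : Fin m => (k₀ : ℕ) ≤ (i : ℕ)) := by
        ext i
        simp only [Finset.mem_filter, Finset.mem_univ, true_and]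
        constructor
        · intro hi
          exact Fin.le_def.mp (Finset.min'_le _ i (by
            simp only [Finset.mem_filter, Finset.mem_univ, true_and]; exact hi))
        · intro hi
          have hk₀mem := Finset.min'_mem _ hne
          simp only [Finset.mem_filter, Finset.mem_univ, true_and] at hk₀mem
          exact lt_of_lt_of_le hk₀mem (hc_mono.monotone (Fin.le_def.mpr hi))
      have hBeq : {x | t < g x} ∩ Ω = Ω \ A (k₀ : ℕ) := by
        rw [hBtalt, hBset t, hfilter_eq]
        exact hUnionTail (k₀ : ℕ)
      rcases Nat.eq_zero_or_pos (k₀ : ℕ) with hk0 | hk0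
      · -- the level set is all of Ω
        have hBΩ : {x | t < g x} ∩ Ω = Ω := by rw [hBeq, hk0, hA0, diff_empty]
        have hEsubΩ : {x | t < ρ₀ x} ∩ Ω ⊆ Ω := inter_subset_right
        have hEmeas : MeasurableSet ({x | t < ρ₀ x} ∩ Ω) := hmρ.inter hΩ_meas
        have hEfull : volume (Ω \ ({x | t < ρ₀ x} ∩ Ω)) = 0 := by
          rw [measure_diff hEsubΩ hEmeas.nullMeasurableSet (hfinsub _ hEsubΩ), hvolEq, hBΩ]
          exact tsub_self _
        have hsplitΩ := lintegral_union (μ := volume)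
          (f := fun x => ENNReal.ofReal (f x)) (hΩ_meas.diff hEmeas)
          ((disjoint_sdiff_self_right (x := {x | t < ρ₀ x} ∩ Ω) (y := Ω)).mono_right
            (le_refl _))
        rw [union_diff_cancel hEsubΩ] at hsplitΩ
        rw [setLIntegral_measure_zero _ _ hEfull, add_zero] at hsplitΩ
        rw [hBΩ]
        exact le_of_eq hsplitΩ
      · have hkm : (k₀ : ℕ) < m := k₀.isLt
        have hAk : A (k₀ : ℕ) = Ω ∩ {x | s (k₀ : ℕ) ≤ f x} := hAin _ hk0 hkm
        refine bathtub_s14 volume f (s (k₀ : ℕ)) ({x | t < g x} ∩ Ω) ({x | t < ρ₀ x} ∩ Ω)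
          ?_ ?_ ?_ ?_ ?_ ?_ ?_
        · intro x hx
          rw [hBeq, hAk] at hx
          rcases hx with ⟨hxΩ, hxn⟩
          by_contra hge
          push_neg at hge
          exact hxn ⟨hxΩ, hge⟩
        · intro x hxE hxB
          have hxΩ : x ∈ Ω := hxE.2
          have hxA : x ∈ A (k₀ : ℕ) := by
            by_contra hnot
            exact hxB (hBeq ▸ (⟨hxΩ, hnot⟩ : x ∈ Ω \ A (k₀ : ℕ)))
          rw [hAk] at hxA
          exact hxA.2
        · exact hmg.inter hΩ_meas
        · exact hmρ.inter hΩ_meas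
        · exact hfinsub _ inter_subset_right
        · exact hfinsub _ inter_subset_right
        · exact hvolEq
    · have hBempty : {x | t < g x} ∩ Ω = ∅ := by
        rw [hBtalt, hBset t, Finset.not_nonempty_iff_eq_empty.mp hne]
        simp
      rw [hBempty]
      simp
  -- layer cake
  have hρ₀_nn_ν : 0 ≤ᵐ[ν] ρ₀ :=
    Filter.Eventually.filter_mono
      ((withDensity_absolutelyContinuous (volume.restrict Ω)
        (fun x => ENNReal.ofReal (f x))).ae_le)
      (hρ₀_lb.mono fun x hx => le_trans (hc_pos i0).le hx)
  have hg_nn_ν : 0 ≤ᵐ[ν] g := Filter.Eventually.of_forall hg_nonneg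
  have hlayρ := lintegral_eq_lintegral_meas_lt ν hρ₀_nn_ν hρ₀_meas.aemeasurable
  have hlayg := lintegral_eq_lintegral_meas_lt ν hg_nn_ν hg_meas.aemeasurable
  have hconv : ∀ (h : EuclideanSpace ℝ (Fin N) → ℝ), Measurable h →
      (∀ᵐ x ∂(volume.restrict Ω), 0 ≤ h x) →
      ∫⁻ x in Ω, ENNReal.ofReal (h x * f x) = ∫⁻ x, ENNReal.ofReal (h x) ∂ν := by
    intro h hmeas hnn
    rw [hν, lintegral_withDensity_eq_lintegral_mul _ hftil_meas hmeas.ennreal_ofReal]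
    apply lintegral_congr_ae
    filter_upwards [hnn] with x hx
    simp only [Pi.mul_apply]
    rw [ENNReal.ofReal_mul hx, mul_comm]
  have hconvρ := hconv ρ₀ hρ₀_meas (hρ₀_lb.mono fun x hx => le_trans (hc_pos i0).le hx)
  have hconvg := hconv g hg_meas (Filter.Eventually.of_forall hg_nonneg)
  have hmono' : ∫⁻ x, ENNReal.ofReal (g x) ∂ν ≤ ∫⁻ x, ENNReal.ofReal (ρ₀ x) ∂ν := by
    rw [hlayρ, hlayg]
    exact lintegral_mono fun t => hkeyν t
  have hfinR : ∫⁻ x in Ω, ENNReal.ofReal (ρ₀ x * f x) ≠ ⊤ := by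
    have hb := hInt.hasFiniteIntegral
    rw [HasFiniteIntegral] at hb
    refine ne_of_lt (lt_of_le_of_lt ?_ hb)
    exact lintegral_mono fun x => Real.ofReal_le_enorm _
  have hRHS : ∫ x in Ω, ρ₀ x * f x = (∫⁻ x in Ω, ENNReal.ofReal (ρ₀ x * f x)).toReal := by
    apply integral_eq_lintegral_of_nonneg_ae
    · filter_upwards [hρ₀_lb, hf_ae0] with x h1 h2
      exact mul_nonneg (le_trans (hc_pos i0).le h1) h2
    · exact (hρ₀_meas.mul hf_meas).aestronglyMeasurable
  have hLHS : ∫ x in Ω, g x * f x = (∫⁻ x in Ω, ENNReal.ofReal (g x * f x)).toReal := by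
    apply integral_eq_lintegral_of_nonneg_ae
    · filter_upwards [hf_ae0] with x h2
      exact mul_nonneg (hg_nonneg x) h2
    · exact (hg_meas.mul hf_meas).aestronglyMeasurable
  show ∫ x in Ω, g x * f x ≤ ∫ x in Ω, ρ₀ x * f x
  rw [hLHS, hRHS]
  apply ENNReal.toReal_mono hfinR
  calc ∫⁻ x in Ω, ENNReal.ofReal (g x * f x) = ∫⁻ x, ENNReal.ofReal (g x) ∂ν := hconvg
    _ ≤ ∫⁻ x, ENNReal.ofReal (ρ₀ x) ∂ν := hmono'
    _ = ∫⁻ x in Ω, ENNReal.ofReal (ρ₀ x * f x) := hconvρ.symm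
end
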